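/- arXiv:1410.4325 — 5 statements merged into one kernel-verified Lean document; each statement's English description precedes it below -/
import Mathlib

section
/- Let X be a Banach space and A ⊆ X* a subset with closed convex w*-hull equal to the closed unit ball of X*. Then for every x in the unit sphere of X, the infimum over α > 0 of the diameters of the w*-slices S(A, x, α) = {x* ∈ A : x*(x) > sup_{a ∈ A} a(x) − α} equals the infimum over α > 0 of the diameters of the slices S(B_{X*}, x, α). -/
open Metric Set NormedSpace

section Aux

variable {X : Type*} [NormedAddCommGroup X] [NormedSpace ℝ X]

lemma stmt0_eval_isLinear (x : X) : IsLinearMap ℝ (fun f : X →L[ℝ] ℝ => f x) :=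
  ⟨fun _ _ => rfl, fun _ _ => rfl⟩

lemma stmt0_eval_le {f : X →L[ℝ] ℝ} (y : X) : f y ≤ ‖f‖ * ‖y‖ :=
  calc f y ≤ |f y| := le_abs_self _
  _ = ‖f y‖ := (Real.norm_eq_abs _).symm
  _ ≤ ‖f‖ * ‖y‖ := f.le_opNorm y

lemma stmt0_hull_le {A : Set (X →L[ℝ] ℝ)} {x : X} {c : ℝ} (h : ∀ f ∈ A, f x ≤ c) :
    ∀ p ∈ convexHull ℝ A, p x ≤ c := fun _ hp =>
  convexHull_min (fun f hf => h f hf) (convex_halfSpace_le (stmt0_eval_isLinear x) c) hp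

end Aux

set_option maxHeartbeats 2000000 in
/-- If `A ⊆ X*` has w*-closed convex hull equal to the closed unit ball of
`X*`, then for every `x` in the unit sphere of `X` the infimum over `α > 0` of the diameters
of the w*-slices `S(A, x, α)` equals the infimum over `α > 0` of the diameters of the
w*-slices `S(B_{X*}, x, α)`. -/
theorem stmt0 (X : Type*) [NormedAddCommGroup X] [NormedSpace ℝ X] [CompleteSpace X]
    (A : Set (X →L[ℝ] ℝ))
    (hA : closure (StrongDual.toWeakDual '' (convexHull ℝ A)) =
      StrongDual.toWeakDual '' (closedBall (0 : X →L[ℝ] ℝ) 1))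
    (x : X) (hx : ‖x‖ = 1) :
    sInf {d : ℝ | ∃ α : ℝ, 0 < α ∧
        d = Metric.diam {f ∈ A | f x > sSup ((fun g : X →L[ℝ] ℝ => g x) '' A) - α}} =
    sInf {d : ℝ | ∃ α : ℝ, 0 < α ∧
        d = Metric.diam {f : X →L[ℝ] ℝ | ‖f‖ ≤ 1 ∧
          f x > sSup ((fun g : X →L[ℝ] ℝ => g x) '' closedBall 0 1) - α}} := by
  classical
  have hxne : x ≠ 0 := by
    intro h; rw [h, norm_zero] at hx; exact one_ne_zero hx.symm
  -- the convex hull of A is inside the unit ball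
  have hhull : convexHull ℝ A ⊆ closedBall (0 : X →L[ℝ] ℝ) 1 := by
    intro p hp
    have h1 : StrongDual.toWeakDual p ∈
        StrongDual.toWeakDual '' (closedBall (0 : X →L[ℝ] ℝ) 1) := by
      rw [← hA]; exact subset_closure (Set.mem_image_of_mem _ hp)
    obtain ⟨q, hq, hpq⟩ := h1
    rwa [StrongDual.toWeakDual.injective hpq] at hq
  have hAsub : A ⊆ closedBall (0 : X →L[ℝ] ℝ) 1 := (subset_convexHull ℝ A).trans hhull
  have hAnorm : ∀ f ∈ A, ‖f‖ ≤ 1 := fun f hf => mem_closedBall_zero_iff.mp (hAsub hf)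
  have hhullnorm : ∀ f ∈ convexHull ℝ A, ‖f‖ ≤ 1 :=
    fun f hf => mem_closedBall_zero_iff.mp (hhull hf)
  have hAne : A.Nonempty := by
    by_contra h
    rw [Set.not_nonempty_iff_eq_empty] at h
    have h0 : StrongDual.toWeakDual (0 : X →L[ℝ] ℝ) ∈
        StrongDual.toWeakDual '' (closedBall (0 : X →L[ℝ] ℝ) 1) :=
      Set.mem_image_of_mem _ (mem_closedBall_self zero_le_one)
    rw [← hA, h] at h0
    simp at h0
  obtain ⟨g, hg1, hgx⟩ := exists_dual_vector ℝ x (norm_ne_zero_iff.mpr hxne)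
  have hgx1 : g x = 1 := by rw [hgx, hx]; norm_num
  have hbddA : BddAbove ((fun g : X →L[ℝ] ℝ => g x) '' A) := by
    refine ⟨1, ?_⟩
    rintro _ ⟨f, hf, rfl⟩
    calc f x ≤ ‖f‖ * ‖x‖ := stmt0_eval_le x
    _ ≤ 1 := by rw [hx, mul_one]; exact hAnorm f hf
  have hsB : sSup ((fun g : X →L[ℝ] ℝ => g x) '' closedBall 0 1) = 1 := by
    apply le_antisymm
    · apply csSup_le (Set.Nonempty.image _ ⟨0, mem_closedBall_self zero_le_one⟩)
      rintro _ ⟨f, hf, rfl⟩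
      calc f x ≤ ‖f‖ * ‖x‖ := stmt0_eval_le x
      _ ≤ 1 := by rw [hx, mul_one]; exact mem_closedBall_zero_iff.mp hf
    · refine le_csSup ⟨1, ?_⟩ ⟨g, mem_closedBall_zero_iff.mpr hg1.le, hgx1⟩
      rintro _ ⟨f, hf, rfl⟩
      calc f x ≤ ‖f‖ * ‖x‖ := stmt0_eval_le x
      _ ≤ 1 := by rw [hx, mul_one]; exact mem_closedBall_zero_iff.mp hf
  have hsA : sSup ((fun g : X →L[ℝ] ℝ => g x) '' A) = 1 := by
    apply le_antisymm
    · apply csSup_le (hAne.image _)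
      rintro _ ⟨f, hf, rfl⟩
      calc f x ≤ ‖f‖ * ‖x‖ := stmt0_eval_le x
      _ ≤ 1 := by rw [hx, mul_one]; exact hAnorm f hf
    · by_contra h
      push_neg at h
      set M := sSup ((fun g : X →L[ℝ] ℝ => g x) '' A) with hM
      have hAle : ∀ f ∈ A, f x ≤ M := fun f hf => le_csSup hbddA (Set.mem_image_of_mem _ hf)
      have hhullle := stmt0_hull_le hAle
      have hclosed : IsClosed {φ : WeakDual ℝ X | φ x ≤ M} :=
        isClosed_le (WeakDual.eval_continuous x) continuous_const
      have hsub : StrongDual.toWeakDual '' convexHull ℝ A ⊆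
          {φ : WeakDual ℝ X | φ x ≤ M} := by
        rintro _ ⟨p, hp, rfl⟩
        exact hhullle p hp
      have hcl := closure_minimal hsub hclosed
      rw [hA] at hcl
      have hgmem : StrongDual.toWeakDual g ∈
          StrongDual.toWeakDual '' (closedBall (0 : X →L[ℝ] ℝ) 1) :=
        Set.mem_image_of_mem _ (mem_closedBall_zero_iff.mpr hg1.le)
      have := hcl hgmem
      simp only [Set.mem_setOf_eq] at this
      rw [show (StrongDual.toWeakDual g) x = g x from rfl, hgx1] at this
      exact absurd this (not_le.mpr h)
  rw [hsA, hsB]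
  -- basic facts about the two sets of diameters
  have hLne : {d : ℝ | ∃ α : ℝ, 0 < α ∧
      d = Metric.diam {f ∈ A | f x > 1 - α}}.Nonempty := ⟨_, 1, one_pos, rfl⟩
  have hRne : {d : ℝ | ∃ α : ℝ, 0 < α ∧
      d = Metric.diam {f : X →L[ℝ] ℝ | ‖f‖ ≤ 1 ∧ f x > 1 - α}}.Nonempty := ⟨_, 1, one_pos, rfl⟩
  have hLbdd : BddBelow {d : ℝ | ∃ α : ℝ, 0 < α ∧
      d = Metric.diam {f ∈ A | f x > 1 - α}} := by
    refine ⟨0, ?_⟩; rintro d ⟨α, hα, rfl⟩; exact diam_nonneg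
  have hRbdd : BddBelow {d : ℝ | ∃ α : ℝ, 0 < α ∧
      d = Metric.diam {f : X →L[ℝ] ℝ | ‖f‖ ≤ 1 ∧ f x > 1 - α}} := by
    refine ⟨0, ?_⟩; rintro d ⟨α, hα, rfl⟩; exact diam_nonneg
  apply le_antisymm
  · -- easy direction: the A-slice is contained in the ball slice
    apply le_csInf hRne
    rintro d ⟨α, hα, rfl⟩
    have h1 : Metric.diam {f ∈ A | f x > 1 - α} ≤
        Metric.diam {f : X →L[ℝ] ℝ | ‖f‖ ≤ 1 ∧ f x > 1 - α} := by
      apply diam_mono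
      · rintro f ⟨hfA, hfx⟩; exact ⟨hAnorm f hfA, hfx⟩
      · exact (isBounded_closedBall (x := (0 : X →L[ℝ] ℝ)) (r := 1)).subset
          (fun f hf => mem_closedBall_zero_iff.mpr hf.1)
    exact le_trans (csInf_le hLbdd ⟨α, hα, rfl⟩) h1
  · -- hard direction
    apply le_csInf hLne
    rintro d ⟨β, hβ, rfl⟩
    apply le_of_forall_pos_le_add
    intro ε hε
    set ε' := min ε 1 with hε'def
    have hε'pos : 0 < ε' := lt_min hε one_pos
    have hε'le1 : ε' ≤ 1 := min_le_right _ _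
    have hε'leε : ε' ≤ ε := min_le_left _ _
    set α := β * ε' / 8 with hαdef
    have hαpos : 0 < α := by positivity
    have hαβ : α < β := by nlinarith
    set S := {f ∈ A | f x > 1 - β} with hSdef
    have hSne : S.Nonempty := by
      have hlt : (1 : ℝ) - β < sSup ((fun g : X →L[ℝ] ℝ => g x) '' A) := by
        rw [hsA]; linarith
      obtain ⟨b, hb, hltb⟩ := exists_lt_of_lt_csSup (hAne.image _) hlt
      obtain ⟨a, ha, rfl⟩ := hb
      exact ⟨a, ha, hltb⟩
    have hSsubA : S ⊆ A := fun f hf => hf.1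
    set r := ε' / 4 with hrdef
    have hrpos : 0 < r := by positivity
    set C := {p : X →L[ℝ] ℝ | ∃ u ∈ convexHull ℝ S, ‖p - u‖ ≤ r} with hCdef
    have hhullSnorm : ∀ u ∈ convexHull ℝ S, ‖u‖ ≤ 1 :=
      fun u hu => hhullnorm u (convexHull_mono hSsubA hu)
    -- claim 1 : slices of the hull of A are close to the hull of S
    have claim1 : ∀ p ∈ convexHull ℝ A, p x > 1 - α → p ∈ C := by
      intro p hp hpx
      by_cases hT : (A \ S).Nonempty
      · have hunion : A = S ∪ (A \ S) := (Set.union_diff_cancel hSsubA).symm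
        rw [hunion, convexHull_union hSne hT, mem_convexJoin] at hp
        obtain ⟨u, hu, v, hv, hseg⟩ := hp
        obtain ⟨a, b, ha0, hb0, hab, rfl⟩ := hseg
        have hunorm : ‖u‖ ≤ 1 := hhullSnorm u hu
        have hvnorm : ‖v‖ ≤ 1 := hhullnorm v (convexHull_mono Set.diff_subset hv)
        have hux : u x ≤ 1 := by
          calc u x ≤ ‖u‖ * ‖x‖ := stmt0_eval_le x
          _ ≤ 1 := by rw [hx, mul_one]; exact hunorm
        have hvx : v x ≤ 1 - β := by
          refine stmt0_hull_le ?_ v hv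
          intro f hf
          by_contra hc
          push_neg at hc
          exact hf.2 ⟨hf.1, hc⟩
        have happ : (a • u + b • v) x = a * u x + b * v x := by
          simp [ContinuousLinearMap.add_apply, ContinuousLinearMap.smul_apply, smul_eq_mul]
        have hble : b * β < α := by
          have h2 : (a • u + b • v) x ≤ 1 - b * β := by rw [happ]; nlinarith
          linarith [hpx.trans_le h2]
        refine ⟨u, hu, ?_⟩
        have heq : a • u + b • v - u = b • (v - u) := by
          have ha' : a = 1 - b := by linarith
          rw [ha']; module
        rw [heq]
        have hns : ‖b • (v - u)‖ = b * ‖v - u‖ := by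
          have := norm_smul b (v - u)
          rw [Real.norm_eq_abs, abs_of_nonneg hb0] at this
          exact this
        rw [hns]
        have hvu : ‖v - u‖ ≤ 2 := (norm_sub_le _ _).trans (by linarith)
        have hbsmall : b ≤ α / β := by
          rw [le_div_iff₀ hβ]; exact hble.le
        calc b * ‖v - u‖ ≤ (α / β) * 2 := by
              apply mul_le_mul hbsmall hvu (norm_nonneg _) (by positivity)
        _ = r := by rw [hαdef, hrdef]; field_simp; ring
      · rw [Set.not_nonempty_iff_eq_empty, Set.diff_eq_empty] at hT
        exact ⟨p, convexHull_mono hT hp, by simpa using hrpos.le⟩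
    -- claim 2 : elements of the ball slice lie in the w*-closure of (image of) C
    have claim2 : ∀ f : X →L[ℝ] ℝ, ‖f‖ ≤ 1 → f x > 1 - α →
        StrongDual.toWeakDual f ∈ closure (StrongDual.toWeakDual '' C) := by
      intro f hf hfx
      have hfin : StrongDual.toWeakDual f ∈
          closure (StrongDual.toWeakDual '' convexHull ℝ A) := by
        rw [hA]; exact Set.mem_image_of_mem _ (mem_closedBall_zero_iff.mpr hf)
      rw [_root_.mem_closure_iff] at hfin ⊢
      intro O hO hfO
      have hU : IsOpen {φ : WeakDual ℝ X | 1 - α < φ x} :=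
        isOpen_lt continuous_const (WeakDual.eval_continuous x)
      obtain ⟨φ, ⟨hφO, hφU⟩, p, hp, rfl⟩ :=
        hfin (O ∩ {φ : WeakDual ℝ X | 1 - α < φ x}) (hO.inter hU) ⟨hfO, hfx⟩
      exact ⟨_, hφO, Set.mem_image_of_mem _ (claim1 p hp hφU)⟩
    -- properties of C
    have hCne : C.Nonempty := by
      obtain ⟨a, ha⟩ := hSne
      exact ⟨a, a, subset_convexHull ℝ S ha, by simpa using hrpos.le⟩
    have hCnorm : ∀ p ∈ C, ‖p‖ ≤ 1 + r := by
      rintro p ⟨u, hu, hpu⟩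
      calc ‖p‖ = ‖u + (p - u)‖ := by congr 1; abel
      _ ≤ ‖u‖ + ‖p - u‖ := norm_add_le _ _
      _ ≤ 1 + r := add_le_add (hhullSnorm u hu) hpu
    have hCdiff : ∀ p ∈ C, ∀ q ∈ C, ‖p - q‖ ≤ Metric.diam S + 2 * r := by
      rintro p ⟨u, hu, hpu⟩ q ⟨u', hu', hqu⟩
      have hbd : Bornology.IsBounded (convexHull ℝ S) :=
        (isBounded_closedBall (x := (0 : X →L[ℝ] ℝ)) (r := 1)).subset
          (fun f hf => mem_closedBall_zero_iff.mpr (hhullSnorm f hf))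
      have huu' : ‖u - u'‖ ≤ Metric.diam S := by
        have h1 : dist u u' ≤ Metric.diam (convexHull ℝ S) := dist_le_diam_of_mem hbd hu hu'
        rwa [convexHull_diam, dist_eq_norm] at h1
      calc ‖p - q‖ = ‖(p - u) + (u - u') + (u' - q)‖ := by congr 1; abel
      _ ≤ ‖(p - u) + (u - u')‖ + ‖u' - q‖ := norm_add_le _ _
      _ ≤ ‖p - u‖ + ‖u - u'‖ + ‖u' - q‖ := by linarith [norm_add_le (p - u) (u - u')]
      _ ≤ r + Metric.diam S + r := by
            refine add_le_add (add_le_add hpu huu') ?_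
            rw [norm_sub_rev]; exact hqu
      _ = Metric.diam S + 2 * r := by ring
    set D := Metric.diam S + 2 * r with hDdef
    have hD0 : 0 ≤ D := by positivity
    -- evaluation bounds persisting to the closure
    have key : ∀ f : X →L[ℝ] ℝ, ‖f‖ ≤ 1 → f x > 1 - α → ∀ y : X, ‖y‖ = 1 →
        f y ≤ sSup ((fun p : X →L[ℝ] ℝ => p y) '' C) ∧
        sInf ((fun p : X →L[ℝ] ℝ => p y) '' C) ≤ f y := by
      intro f hf hfx y hy
      have hcl := claim2 f hf hfx
      have hbndC : ∀ b ∈ (fun p : X →L[ℝ] ℝ => p y) '' C, b ≤ 1 + r := by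
        rintro _ ⟨p, hp, rfl⟩
        calc p y ≤ ‖p‖ * ‖y‖ := stmt0_eval_le y
        _ ≤ 1 + r := by rw [hy, mul_one]; exact hCnorm p hp
      have hbndC' : ∀ b ∈ (fun p : X →L[ℝ] ℝ => p y) '' C, -(1 + r) ≤ b := by
        rintro _ ⟨p, hp, rfl⟩
        have h1 : -(p y) ≤ ‖p‖ * ‖y‖ := by
          calc -(p y) ≤ |p y| := neg_le_abs _
          _ = ‖p y‖ := (Real.norm_eq_abs _).symm
          _ ≤ ‖p‖ * ‖y‖ := p.le_opNorm y
        rw [hy, mul_one] at h1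
        have := hCnorm p hp
        linarith
      constructor
      · have hclosed : IsClosed {φ : WeakDual ℝ X |
            φ y ≤ sSup ((fun p : X →L[ℝ] ℝ => p y) '' C)} :=
          isClosed_le (WeakDual.eval_continuous y) continuous_const
        have hsub : StrongDual.toWeakDual '' C ⊆ {φ : WeakDual ℝ X |
            φ y ≤ sSup ((fun p : X →L[ℝ] ℝ => p y) '' C)} := by
          rintro _ ⟨p, hp, rfl⟩
          exact le_csSup ⟨1 + r, hbndC⟩ (Set.mem_image_of_mem _ hp)
        exact closure_minimal hsub hclosed hcl
      · have hclosed : IsClosed {φ : WeakDual ℝ X |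
            sInf ((fun p : X →L[ℝ] ℝ => p y) '' C) ≤ φ y} :=
          isClosed_le continuous_const (WeakDual.eval_continuous y)
        have hsub : StrongDual.toWeakDual '' C ⊆ {φ : WeakDual ℝ X |
            sInf ((fun p : X →L[ℝ] ℝ => p y) '' C) ≤ φ y} := by
          rintro _ ⟨p, hp, rfl⟩
          exact csInf_le ⟨-(1 + r), hbndC'⟩ (Set.mem_image_of_mem _ hp)
        exact closure_minimal hsub hclosed hcl
    -- the sup/inf gap over C is at most D
    have gap : ∀ y : X, ‖y‖ = 1 →
        sSup ((fun p : X →L[ℝ] ℝ => p y) '' C) ≤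
        sInf ((fun p : X →L[ℝ] ℝ => p y) '' C) + D := by
      intro y hy
      apply csSup_le (hCne.image _)
      rintro _ ⟨p, hp, rfl⟩
      have h1 : p y - D ≤ sInf ((fun p : X →L[ℝ] ℝ => p y) '' C) := by
        apply le_csInf (hCne.image _)
        rintro _ ⟨q, hq, rfl⟩
        have h2 : p y - q y ≤ ‖p - q‖ := by
          calc p y - q y = (p - q) y := by simp
          _ ≤ ‖p - q‖ * ‖y‖ := stmt0_eval_le y
          _ = ‖p - q‖ := by rw [hy, mul_one]
        linarith [hCdiff p hp q hq]
      linarith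
    -- diameter of the ball slice is at most D
    have hdiam : Metric.diam {f : X →L[ℝ] ℝ | ‖f‖ ≤ 1 ∧ f x > 1 - α} ≤ D := by
      apply diam_le_of_forall_dist_le hD0
      rintro f ⟨hf1, hf2⟩ g ⟨hg1', hg2⟩
      rw [dist_eq_norm]
      apply ContinuousLinearMap.opNorm_le_of_unit_norm hD0
      intro y hy
      obtain ⟨hfs, hfi⟩ := key f hf1 hf2 y hy
      obtain ⟨hgs, hgi⟩ := key g hg1' hg2 y hy
      have hgap := gap y hy
      rw [Real.norm_eq_abs, abs_le]
      constructor
      · have : (f - g) y = f y - g y := by simp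
        rw [this]; linarith
      · have : (f - g) y = f y - g y := by simp
        rw [this]; linarith
    -- conclude
    have hfinal : sInf {d : ℝ | ∃ α : ℝ, 0 < α ∧
        d = Metric.diam {f : X →L[ℝ] ℝ | ‖f‖ ≤ 1 ∧ f x > 1 - α}} ≤ D :=
      le_trans (csInf_le hRbdd ⟨α, hαpos, rfl⟩) hdiam
    have h2r : 2 * r ≤ ε := by rw [hrdef]; linarith
    calc sInf {d : ℝ | ∃ α : ℝ, 0 < α ∧
        d = Metric.diam {f : X →L[ℝ] ℝ | ‖f‖ ≤ 1 ∧ f x > 1 - α}} ≤ D := hfinal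
    _ ≤ Metric.diam S + ε := by rw [hDdef]; linarith
    _ = Metric.diam {f ∈ A | f x > 1 - β} + ε := by rw [hSdef]
end

section
/- Let T be the tree of finite sequences of natural numbers ordered by extension. For a finitely supported function x : T → ℝ define ‖x‖ as the supremum, over all finite families {S₁,…,Sₙ} of pairwise disjoint finite totally ordered subsets (segments) of T, of (Σᵢ (Σ_{t ∈ Sᵢ} x(t))²)^{1/2}. Then ‖·‖ is a norm on the space of finitely supported real functions on T. -/
/-- A segment in the tree `T` of finite sequences of naturals: a finite subset that is
totally ordered under the prefix (extension) order. -/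
def SegL (S : Finset (List ℕ)) : Prop :=
  ∀ s ∈ S, ∀ t ∈ S, s <+: t ∨ t <+: s

/-- The `JT_∞` norm of a finitely supported function `x : T → ℝ`: the supremum over all
finite families of pairwise disjoint segments `S₁, …, Sₙ` of `(Σᵢ (Σ_{t ∈ Sᵢ} x t)²)^{1/2}`. -/
noncomputable def jtNorm (x : (List ℕ) →₀ ℝ) : ℝ :=
  sSup {r : ℝ | ∃ F : Finset (Finset (List ℕ)), (∀ S ∈ F, SegL S) ∧
    (∀ S ∈ F, ∀ S' ∈ F, S ≠ S' → Disjoint S S') ∧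
    r = Real.sqrt (∑ S ∈ F, (∑ t ∈ S, x t) ^ 2)}

def jtSet (x : (List ℕ) →₀ ℝ) : Set ℝ :=
  {r : ℝ | ∃ F : Finset (Finset (List ℕ)), (∀ S ∈ F, SegL S) ∧
    (∀ S ∈ F, ∀ S' ∈ F, S ≠ S' → Disjoint S S') ∧
    r = Real.sqrt (∑ S ∈ F, (∑ t ∈ S, x t) ^ 2)}

lemma jtNorm_eq (x : (List ℕ) →₀ ℝ) : jtNorm x = sSup (jtSet x) := rfl

lemma zero_mem_jtSet (x : (List ℕ) →₀ ℝ) : (0:ℝ) ∈ jtSet x :=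
  ⟨∅, by simp, by simp, by simp⟩

lemma jtSet_bddAbove (x : (List ℕ) →₀ ℝ) : BddAbove (jtSet x) := by
  refine ⟨∑ t ∈ x.support, |x t|, ?_⟩
  rintro r ⟨F, hseg, hdis, rfl⟩
  have h1 : ∀ S ∈ F, (∑ t ∈ S, x t) = ∑ t ∈ S ∩ x.support, x t := by
    intro S hS
    refine (Finset.sum_subset (Finset.inter_subset_left) ?_).symm
    intro t ht hnt
    have : t ∉ x.support := fun h => hnt (Finset.mem_inter.2 ⟨ht, h⟩)
    simpa [Finsupp.notMem_support_iff] using this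
  calc Real.sqrt (∑ S ∈ F, (∑ t ∈ S, x t) ^ 2)
      ≤ Real.sqrt ((∑ S ∈ F, |∑ t ∈ S, x t|) ^ 2) := by
        apply Real.sqrt_le_sqrt
        have := Finset.sum_sq_le_sq_sum_of_nonneg (s := F)
          (f := fun S => |∑ t ∈ S, x t|) (fun i _ => abs_nonneg _)
        simpa [sq_abs] using this
    _ = ∑ S ∈ F, |∑ t ∈ S, x t| := Real.sqrt_sq (Finset.sum_nonneg fun _ _ => abs_nonneg _)
    _ ≤ ∑ S ∈ F, ∑ t ∈ S ∩ x.support, |x t| := by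
        refine Finset.sum_le_sum fun S hS => ?_
        rw [h1 S hS]
        exact Finset.abs_sum_le_sum_abs _ _
    _ = ∑ t ∈ F.biUnion (fun S => S ∩ x.support), |x t| := by
        refine (Finset.sum_biUnion ?_).symm
        intro S hS S' hS' hne
        exact (hdis S hS S' hS' hne).mono Finset.inter_subset_left Finset.inter_subset_left
    _ ≤ ∑ t ∈ x.support, |x t| := by
        refine Finset.sum_le_sum_of_subset_of_nonneg ?_ (fun _ _ _ => abs_nonneg _)
        intro t ht
        rcases Finset.mem_biUnion.1 ht with ⟨S, hS, htS⟩
        exact (Finset.mem_inter.1 htS).2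

lemma le_jtNorm (x : (List ℕ) →₀ ℝ) {F : Finset (Finset (List ℕ))}
    (hseg : ∀ S ∈ F, SegL S) (hdis : ∀ S ∈ F, ∀ S' ∈ F, S ≠ S' → Disjoint S S') :
    Real.sqrt (∑ S ∈ F, (∑ t ∈ S, x t) ^ 2) ≤ jtNorm x :=
  le_csSup (jtSet_bddAbove x) ⟨F, hseg, hdis, rfl⟩

lemma jtNorm_nonneg (x : (List ℕ) →₀ ℝ) : 0 ≤ jtNorm x :=
  le_csSup (jtSet_bddAbove x) (zero_mem_jtSet x)

lemma jtNorm_zero : jtNorm (0 : (List ℕ) →₀ ℝ) = 0 := by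
  refine le_antisymm (csSup_le ⟨0, zero_mem_jtSet 0⟩ ?_) (jtNorm_nonneg 0)
  rintro r ⟨F, _, _, rfl⟩
  simp

lemma jtNorm_smul_le (a : ℝ) (x : (List ℕ) →₀ ℝ) : jtNorm (a • x) ≤ |a| * jtNorm x := by
  refine csSup_le ⟨0, zero_mem_jtSet _⟩ ?_
  rintro r ⟨F, hseg, hdis, rfl⟩
  have : Real.sqrt (∑ S ∈ F, (∑ t ∈ S, (a • x) t) ^ 2)
      = |a| * Real.sqrt (∑ S ∈ F, (∑ t ∈ S, x t) ^ 2) := by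
    have : ∀ S ∈ F, (∑ t ∈ S, (a • x) t) ^ 2 = a ^ 2 * (∑ t ∈ S, x t) ^ 2 := by
      intro S _
      simp [Finsupp.smul_apply, ← Finset.mul_sum, mul_pow]
    rw [Finset.sum_congr rfl this, ← Finset.mul_sum, Real.sqrt_mul (sq_nonneg a),
      Real.sqrt_sq_eq_abs]
  rw [this]
  exact mul_le_mul_of_nonneg_left (le_jtNorm x hseg hdis) (abs_nonneg a)

/-- `jtNorm` is a norm on the space of finitely supported real
functions on the tree `T`. -/
theorem stmt1 :
    (∀ x : (List ℕ) →₀ ℝ, 0 ≤ jtNorm x) ∧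
    (∀ x : (List ℕ) →₀ ℝ, jtNorm x = 0 ↔ x = 0) ∧
    (∀ (a : ℝ) (x : (List ℕ) →₀ ℝ), jtNorm (a • x) = |a| * jtNorm x) ∧
    (∀ x y : (List ℕ) →₀ ℝ, jtNorm (x + y) ≤ jtNorm x + jtNorm y) := by
  refine ⟨jtNorm_nonneg, ?_, ?_, ?_⟩
  · intro x
    constructor
    · intro h
      by_contra hx
      obtain ⟨t, ht⟩ : ∃ t, x t ≠ 0 := by
        by_contra h'
        push_neg at h'
        exact hx (Finsupp.ext h')
      have hmem : |x t| ≤ jtNorm x := by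
        have := le_jtNorm x (F := {({t} : Finset (List ℕ))})
          (by intro S hS s hs u hu
              simp only [Finset.mem_singleton] at hS
              subst hS
              simp only [Finset.mem_singleton] at hs hu
              subst hs; subst hu; exact Or.inl List.prefix_rfl)
          (by intro S hS S' hS' hne
              simp only [Finset.mem_singleton] at hS hS'
              exact absurd (hS.trans hS'.symm) hne)
        simpa [Real.sqrt_sq_eq_abs] using this
      rw [h] at hmem
      exact ht (abs_nonpos_iff.1 hmem)
    · rintro rfl; exact jtNorm_zero
  · intro a x
    rcases eq_or_ne a 0 with rfl | ha
    · simp [jtNorm_zero]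
    · refine le_antisymm (jtNorm_smul_le a x) ?_
      have h2 : jtNorm x ≤ |a⁻¹| * jtNorm (a • x) := by
        have := jtNorm_smul_le a⁻¹ (a • x)
        rwa [smul_smul, inv_mul_cancel₀ ha, one_smul] at this
      rw [abs_inv] at h2
      calc |a| * jtNorm x ≤ |a| * (|a|⁻¹ * jtNorm (a • x)) :=
            mul_le_mul_of_nonneg_left h2 (abs_nonneg a)
        _ = jtNorm (a • x) := by
            field_simp
  · intro x y
    refine csSup_le ⟨0, zero_mem_jtSet _⟩ ?_
    rintro r ⟨F, hseg, hdis, rfl⟩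
    set u : EuclideanSpace ℝ ↥F := WithLp.toLp 2 (fun S => ∑ t ∈ (S : Finset (List ℕ)), x t) with hu
    set v : EuclideanSpace ℝ ↥F := WithLp.toLp 2 (fun S => ∑ t ∈ (S : Finset (List ℕ)), y t) with hv
    have hsum : ∀ S : ↥F, (u + v) S = ∑ t ∈ (S : Finset (List ℕ)), (x + y) t := by
      intro S
      simp [hu, hv, Finsupp.add_apply, Finset.sum_add_distrib]
    have key : Real.sqrt (∑ S ∈ F, (∑ t ∈ S, (x + y) t) ^ 2) = ‖u + v‖ := by
      rw [EuclideanSpace.norm_eq]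
      congr 1
      rw [← Finset.sum_coe_sort F (fun S => (∑ t ∈ S, (x + y) t) ^ 2)]
      refine Finset.sum_congr rfl fun S _ => ?_
      rw [hsum S, Real.norm_eq_abs, sq_abs]
    have hun : ‖u‖ = Real.sqrt (∑ S ∈ F, (∑ t ∈ S, x t) ^ 2) := by
      rw [EuclideanSpace.norm_eq, ← Finset.sum_coe_sort F (fun S => (∑ t ∈ S, x t) ^ 2)]
      congr 1
      exact Finset.sum_congr rfl fun S _ => by rw [Real.norm_eq_abs, sq_abs]
    have hvn : ‖v‖ = Real.sqrt (∑ S ∈ F, (∑ t ∈ S, y t) ^ 2) := by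
      rw [EuclideanSpace.norm_eq, ← Finset.sum_coe_sort F (fun S => (∑ t ∈ S, y t) ^ 2)]
      congr 1
      exact Finset.sum_congr rfl fun S _ => by rw [Real.norm_eq_abs, sq_abs]
    calc Real.sqrt (∑ S ∈ F, (∑ t ∈ S, (x + y) t) ^ 2) = ‖u + v‖ := key
      _ ≤ ‖u‖ + ‖v‖ := norm_add_le u v
      _ ≤ jtNorm x + jtNorm y := add_le_add
          (hun ▸ le_jtNorm x hseg hdis) (hvn ▸ le_jtNorm y hseg hdis)
end

section
/- Let x : T → ℝ be a finitely supported function on the dyadic tree with ‖x‖_{JH} ≤ 1 − 1/n for some integer n ≥ 2. Let t₁,…,tₙ be pairwise distinct nodes, all at the same level ℓ strictly greater than the maximal level of supp(x), and all lying above a common node a whose level exceeds the maximal level of supp(x). For any signs μ₁,…,μₙ ∈ {−1,1}, the function y agreeing with x on supp(x), taking value μᵢ/n at tᵢ, and 0 elsewhere satisfies ‖y‖_{JH} ≤ 1. -/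
/-- The tree (ancestor) order on the dyadic tree, coded in `ℕ × ℕ`:
`(n, i) ≤ (m, j)` iff `n ≤ m` and `(n, i)` is obtained from `(m, j)` by repeatedly
passing to the parent `(m-1, j/2)`. -/
def dLe (a b : ℕ × ℕ) : Prop := a.1 ≤ b.1 ∧ b.2 / 2 ^ (b.1 - a.1) = a.2

/-- A `p–q` segment in the dyadic tree: a totally ordered finite set of valid nodes
containing exactly one node at each level `k` with `p ≤ k ≤ q` and nothing else. -/
def IsPQSegD (S : Finset (ℕ × ℕ)) (p q : ℕ) : Prop :=
  (∀ t ∈ S, t.2 < 2 ^ t.1) ∧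
  (∀ t ∈ S, p ≤ t.1 ∧ t.1 ≤ q) ∧
  (∀ k : ℕ, p ≤ k → k ≤ q → ∃! t, t ∈ S ∧ t.1 = k) ∧
  (∀ s ∈ S, ∀ t ∈ S, dLe s t ∨ dLe t s)

/-- An admissible family of segments: pairwise disjoint `p–q` segments for a common pair
`p ≤ q`. -/
def AdmissibleD (F : Finset (Finset (ℕ × ℕ))) : Prop :=
  ∃ p q : ℕ, p ≤ q ∧ (∀ S ∈ F, IsPQSegD S p q) ∧
    ∀ S ∈ F, ∀ S' ∈ F, S ≠ S' → Disjoint S S'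

/-- The `JH` norm of a finitely supported function on the dyadic tree. -/
noncomputable def jhNorm (x : (ℕ × ℕ) →₀ ℝ) : ℝ :=
  sSup {r : ℝ | ∃ F : Finset (Finset (ℕ × ℕ)), AdmissibleD F ∧
    r = ∑ S ∈ F, |∑ t ∈ S, x t|}

lemma jh_sum_le_aux (x : (ℕ × ℕ) →₀ ℝ) (F : Finset (Finset (ℕ × ℕ)))
    (hF : AdmissibleD F) :
    ∑ S ∈ F, |∑ t ∈ S, x t| ≤ ∑ s ∈ x.support, |x s| := by
  obtain ⟨p, q, hpq, hseg, hdisj⟩ := hF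
  have h1 : ∑ S ∈ F, |∑ t ∈ S, x t| ≤ ∑ S ∈ F, ∑ t ∈ S, |x t| :=
    Finset.sum_le_sum fun S _ => Finset.abs_sum_le_sum_abs _ _
  have hpd : (↑F : Set (Finset (ℕ × ℕ))).PairwiseDisjoint id := by
    intro S hS S' hS' hne
    exact hdisj S hS S' hS' hne
  have h2 : ∑ S ∈ F, ∑ t ∈ S, |x t| = ∑ t ∈ F.biUnion id, |x t| :=
    (Finset.sum_biUnion hpd).symm
  have h3 : ∑ t ∈ F.biUnion id, |x t| = ∑ t ∈ (F.biUnion id) ∩ x.support, |x t| := by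
    refine (Finset.sum_subset Finset.inter_subset_left ?_).symm
    intro s hs hsn
    have : x s = 0 := by
      by_contra h
      exact hsn (Finset.mem_inter.mpr ⟨hs, Finsupp.mem_support_iff.mpr h⟩)
    simp [this]
  have h4 : ∑ t ∈ (F.biUnion id) ∩ x.support, |x t| ≤ ∑ s ∈ x.support, |x s| :=
    Finset.sum_le_sum_of_subset_of_nonneg Finset.inter_subset_right
      (fun i _ _ => abs_nonneg _)
  linarith

lemma le_jhNorm_aux (x : (ℕ × ℕ) →₀ ℝ) (F : Finset (Finset (ℕ × ℕ)))
    (hF : AdmissibleD F) :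
    ∑ S ∈ F, |∑ t ∈ S, x t| ≤ jhNorm x := by
  apply le_csSup
  · refine ⟨∑ s ∈ x.support, |x s|, ?_⟩
    rintro r ⟨G, hG, rfl⟩
    exact jh_sum_le_aux x G hG
  · exact ⟨F, hF, rfl⟩

/-- If `‖x‖_{JH} ≤ 1 - 1/n` (`n ≥ 2`) and `t₁, …, tₙ` are pairwise
distinct nodes at a common level `L` above the support of `x`, all lying strictly above a
common node `a` whose level exceeds the maximal level of `supp x`, then the function `y`
obtained from `x` by adding the values `μᵢ/n` (with `μᵢ ∈ {-1,1}`) at the nodes `tᵢ`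
satisfies `‖y‖_{JH} ≤ 1`. -/
theorem stmt4 (x : (ℕ × ℕ) →₀ ℝ) (hxval : ∀ s ∈ x.support, s.2 < 2 ^ s.1)
    (n : ℕ) (hn : 2 ≤ n) (hx : jhNorm x ≤ 1 - 1 / (n : ℝ))
    (a : ℕ × ℕ) (hav : a.2 < 2 ^ a.1) (ha : ∀ s ∈ x.support, s.1 < a.1)
    (L : ℕ) (hL : ∀ s ∈ x.support, s.1 < L)
    (t : Fin n → ℕ × ℕ) (htval : ∀ i, (t i).2 < 2 ^ (t i).1)
    (htinj : Function.Injective t)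
    (hlev : ∀ i, (t i).1 = L)
    (habove : ∀ i, dLe a (t i) ∧ a ≠ t i)
    (μ : Fin n → ℝ) (hμ : ∀ i, μ i = 1 ∨ μ i = -1)
    (y : (ℕ × ℕ) →₀ ℝ)
    (hy : y = x + ∑ i, Finsupp.single (t i) (μ i / (n : ℝ))) :
    jhNorm y ≤ 1 := by
  have hnpos : (0:ℝ) < (n:ℝ) := by
    have : 0 < n := by omega
    exact_mod_cast this
  -- level of a is strictly below L
  have haL : a.1 < L := by
    have i0 : Fin n := ⟨0, by omega⟩
    have h1 := (habove i0).1
    have h2 := (habove i0).2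
    rcases lt_or_eq_of_le (le_of_le_of_eq h1.1 (hlev i0)) with h | h
    · exact h
    · exfalso
      apply h2
      have h5 := hlev i0
      have h3 := h1.2
      have h4 : (t i0).1 - a.1 = 0 := by omega
      rw [h4, pow_zero, Nat.div_one] at h3
      exact Prod.ext (by omega) h3.symm
  apply Real.sSup_le
  · rintro r ⟨F, hFadm, rfl⟩
    obtain ⟨p, q, hpq, hseg, hdisj⟩ := hFadm
    set g : Finset (ℕ × ℕ) → ℝ :=
      fun S => ∑ i : Fin n, if t i ∈ S then μ i / (n:ℝ) else 0 with hgdef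
    have hsum : ∀ S : Finset (ℕ × ℕ), ∑ s ∈ S, y s = (∑ s ∈ S, x s) + g S := by
      intro S
      have hval : ∀ s, y s = x s + ∑ i : Fin n, if t i = s then μ i / (n:ℝ) else 0 := by
        intro s
        rw [hy]
        rw [Finsupp.add_apply, Finsupp.finset_sum_apply]
        congr 1
        refine Finset.sum_congr rfl fun i _ => ?_
        exact Finsupp.single_apply
      simp only [hval]
      rw [Finset.sum_add_distrib]
      congr 1
      rw [Finset.sum_comm]
      refine Finset.sum_congr rfl fun i _ => ?_
      exact Finset.sum_ite_eq S (t i) (fun _ => μ i / (n:ℝ))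
    -- each segment contains at most one t i
    have hcard : ∀ S ∈ F, (Finset.univ.filter fun i => t i ∈ S).card ≤ 1 := by
      intro S hS
      refine Finset.card_le_one.mpr fun i hi j hj => ?_
      rw [Finset.mem_filter] at hi hj
      have hLq := (hseg S hS).2.1 (t i) hi.2
      rw [hlev i] at hLq
      obtain ⟨u, _, hu⟩ := (hseg S hS).2.2.1 L hLq.1 hLq.2
      have := (hu (t i) ⟨hi.2, hlev i⟩).trans (hu (t j) ⟨hj.2, hlev j⟩).symm
      exact htinj this
    have hg : ∀ S ∈ F, |g S| ≤ ((Finset.univ.filter fun i => t i ∈ S).card : ℝ) / n := by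
      intro S hS
      have hrw : g S = ∑ i ∈ Finset.univ.filter (fun i => t i ∈ S), μ i / (n:ℝ) :=
        (Finset.sum_filter _ _).symm
      rw [hrw]
      calc |∑ i ∈ Finset.univ.filter (fun i => t i ∈ S), μ i / (n:ℝ)|
          ≤ ∑ i ∈ Finset.univ.filter (fun i => t i ∈ S), |μ i / (n:ℝ)| :=
            Finset.abs_sum_le_sum_abs _ _
        _ = ∑ _i ∈ Finset.univ.filter (fun i => t i ∈ S), 1 / (n:ℝ) := by
            refine Finset.sum_congr rfl fun i _ => ?_
            rw [abs_div, abs_of_pos hnpos]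
            rcases hμ i with h | h <;> rw [h] <;> simp
        _ = ((Finset.univ.filter fun i => t i ∈ S).card : ℝ) / n := by
            rw [Finset.sum_const, nsmul_eq_mul]
            ring
    have htot : ∑ S ∈ F, |∑ s ∈ S, y s| ≤ (∑ S ∈ F, |∑ s ∈ S, x s|) + ∑ S ∈ F, |g S| := by
      rw [← Finset.sum_add_distrib]
      refine Finset.sum_le_sum fun S _ => ?_
      rw [hsum S]
      exact abs_add_le _ _
    by_cases hpa : p ≤ a.1
    · -- every segment containing some t i contains a
      have hamem : ∀ S ∈ F, ∀ i : Fin n, t i ∈ S → a ∈ S := by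
        intro S hS i hi
        have hLq := (hseg S hS).2.1 (t i) hi
        rw [hlev i] at hLq
        obtain ⟨u, hu1, _⟩ := (hseg S hS).2.2.1 a.1 hpa (le_trans haL.le hLq.2)
        have hor := (hseg S hS).2.2.2 u hu1.1 (t i) hi
        have hdua : dLe u (t i) := by
          rcases hor with h | h
          · exact h
          · exfalso
            have h1 := h.1
            rw [hlev i] at h1
            omega
        have hua : u = a := by
          have h1 := hdua.2
          have h2 := (habove i).1.2
          rw [hu1.2] at h1
          exact Prod.ext hu1.2 (h1.symm.trans h2)
        rw [← hua]
        exact hu1.1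
      have hg0 : ∀ S ∈ F, a ∉ S → g S = 0 := by
        intro S hS haS
        refine Finset.sum_eq_zero fun i _ => ?_
        rw [if_neg]
        intro hi
        exact haS (hamem S hS i hi)
      have hF'card : (F.filter fun S => a ∈ S).card ≤ 1 := by
        refine Finset.card_le_one.mpr fun S hS S' hS' => ?_
        rw [Finset.mem_filter] at hS hS'
        by_contra hne
        exact (Finset.disjoint_left.mp (hdisj S hS.1 S' hS'.1 hne) hS.2) hS'.2
      have hsum_g : ∑ S ∈ F, |g S| ≤ 1 / n := by
        rw [← Finset.sum_filter_add_sum_filter_not F (fun S => a ∈ S)]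
        have h2 : ∑ S ∈ F.filter (fun S => ¬ a ∈ S), |g S| = 0 := by
          refine Finset.sum_eq_zero fun S hS => ?_
          rw [Finset.mem_filter] at hS
          rw [hg0 S hS.1 hS.2, abs_zero]
        have h1 : ∑ S ∈ F.filter (fun S => a ∈ S), |g S| ≤ 1 / n := by
          calc ∑ S ∈ F.filter (fun S => a ∈ S), |g S|
              ≤ ∑ _S ∈ F.filter (fun S => a ∈ S), 1 / (n:ℝ) := by
                refine Finset.sum_le_sum fun S hS => ?_
                have hSF := (Finset.mem_filter.mp hS).1
                refine le_trans (hg S hSF) ?_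
                have hc : ((Finset.univ.filter fun i => t i ∈ S).card : ℝ) ≤ 1 := by
                  exact_mod_cast hcard S hSF
                exact div_le_div_of_nonneg_right hc hnpos.le
            _ = ((F.filter fun S => a ∈ S).card : ℝ) * (1 / n) := by
                rw [Finset.sum_const, nsmul_eq_mul]
            _ ≤ 1 * (1 / n) := by
                have hc : ((F.filter fun S => a ∈ S).card : ℝ) ≤ 1 := by
                  exact_mod_cast hF'card
                have : (0:ℝ) ≤ 1 / n := by positivity
                exact mul_le_mul_of_nonneg_right hc this
            _ = 1 / n := by ring
        linarith
      have hxle : ∑ S ∈ F, |∑ s ∈ S, x s| ≤ 1 - 1 / (n:ℝ) :=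
        le_trans (le_jhNorm_aux x F ⟨p, q, hpq, hseg, hdisj⟩) hx
      linarith
    · push_neg at hpa
      have hx0 : ∀ S ∈ F, ∑ s ∈ S, x s = 0 := by
        intro S hS
        refine Finset.sum_eq_zero fun s hs => ?_
        by_contra h
        have hmem := Finsupp.mem_support_iff.mpr h
        have h1 := ha s hmem
        have h2 := ((hseg S hS).2.1 s hs).1
        omega
      have hcount : (∑ S ∈ F, ((Finset.univ.filter fun i => t i ∈ S).card : ℝ)) ≤ n := by
        have hswap : ∑ S ∈ F, (Finset.univ.filter fun i : Fin n => t i ∈ S).card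
            = ∑ i : Fin n, (F.filter fun S => t i ∈ S).card := by
          simp only [Finset.card_filter]
          exact Finset.sum_comm
        have hle1 : ∀ i : Fin n, (F.filter fun S => t i ∈ S).card ≤ 1 := by
          intro i
          refine Finset.card_le_one.mpr fun S hS S' hS' => ?_
          rw [Finset.mem_filter] at hS hS'
          by_contra hne
          exact (Finset.disjoint_left.mp (hdisj S hS.1 S' hS'.1 hne) hS.2) hS'.2
        have : ∑ S ∈ F, (Finset.univ.filter fun i : Fin n => t i ∈ S).card ≤ n := by
          rw [hswap]
          calc ∑ i : Fin n, (F.filter fun S => t i ∈ S).card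
              ≤ ∑ _i : Fin n, 1 := Finset.sum_le_sum fun i _ => hle1 i
            _ = n := by simp
        calc (∑ S ∈ F, ((Finset.univ.filter fun i => t i ∈ S).card : ℝ))
            = ((∑ S ∈ F, (Finset.univ.filter fun i : Fin n => t i ∈ S).card : ℕ) : ℝ) := by
              push_cast; rfl
          _ ≤ (n : ℝ) := by exact_mod_cast this
      calc ∑ S ∈ F, |∑ s ∈ S, y s| = ∑ S ∈ F, |g S| := by
            refine Finset.sum_congr rfl fun S hS => ?_
            rw [hsum S, hx0 S hS, zero_add]
        _ ≤ ∑ S ∈ F, ((Finset.univ.filter fun i => t i ∈ S).card : ℝ) / n :=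
            Finset.sum_le_sum fun S hS => hg S hS
        _ = (∑ S ∈ F, ((Finset.univ.filter fun i => t i ∈ S).card : ℝ)) / n := by
            rw [Finset.sum_div]
        _ ≤ (n : ℝ) / n := by
            exact div_le_div_of_nonneg_right hcount hnpos.le
        _ = 1 := div_self (ne_of_gt hnpos)
  · norm_num
end

section
/- The James–Hagler space JH has the strong diameter two property: every convex combination Σᵢ₌₁ⁿ λᵢ S(B_{JH}, xᵢ*, α) of slices of the closed unit ball of JH has diameter 2. -/
open Metric

/-! ### Auxiliary lemmas -/

noncomputable def uu (k : ℕ) : (ℕ × ℕ) →₀ ℝ :=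
  Finsupp.onFinset ((Finset.range (2 ^ k)).image (fun j => (k, j)))
    (fun t => if t.1 = k ∧ t.2 < 2 ^ k then ((2 : ℝ) ^ k)⁻¹ else 0)
    (by
      intro t ht
      rw [ne_eq, ite_eq_right_iff, not_forall] at ht
      obtain ⟨⟨h1, h2⟩, -⟩ := ht
      exact Finset.mem_image.2 ⟨t.2, Finset.mem_range.2 h2, by rw [← h1]⟩)

lemma uu_apply (k : ℕ) (t : ℕ × ℕ) :
    uu k t = if t.1 = k ∧ t.2 < 2 ^ k then ((2 : ℝ) ^ k)⁻¹ else 0 := rfl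

lemma uu_apply_zero (k : ℕ) (t : ℕ × ℕ) (h : ¬ t.2 < 2 ^ t.1) : uu k t = 0 := by
  rw [uu_apply, if_neg]
  rintro ⟨h1, h2⟩
  exact h (by rw [h1]; exact h2)

lemma uu_valid (k : ℕ) : ∀ t ∈ (uu k).support, t.2 < 2 ^ t.1 := by
  intro t ht
  have h := Finsupp.mem_support_iff.1 ht
  by_contra hc
  exact h (uu_apply_zero k t hc)

noncomputable def vv (A : Finset ℕ) (ε : ℕ → ℝ) : (ℕ × ℕ) →₀ ℝ := ∑ k ∈ A, ε k • uu k

lemma vv_apply (A : Finset ℕ) (ε : ℕ → ℝ) (t : ℕ × ℕ) :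
    vv A ε t = ∑ k ∈ A, ε k * uu k t := by
  rw [vv, Finset.sum_apply']
  simp [Finsupp.smul_apply]

lemma vv_apply_valid (A : Finset ℕ) (ε : ℕ → ℝ) (t : ℕ × ℕ) (hval : t.2 < 2 ^ t.1) :
    vv A ε t = if t.1 ∈ A then ε t.1 * ((2 : ℝ) ^ t.1)⁻¹ else 0 := by
  rw [vv_apply]
  have : ∀ k ∈ A, ε k * uu k t = if t.1 = k then ε k * ((2 : ℝ) ^ k)⁻¹ else 0 := by
    intro k _
    rw [uu_apply]
    by_cases hk : t.1 = k
    · rw [if_pos ⟨hk, by rw [← hk]; exact hval⟩, if_pos hk]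
    · rw [if_neg (fun hc => hk hc.1), if_neg hk, mul_zero]
  rw [Finset.sum_congr rfl this, Finset.sum_ite_eq A t.1 (fun k => ε k * ((2:ℝ)^k)⁻¹)]

lemma vv_valid (A : Finset ℕ) (ε : ℕ → ℝ) : ∀ t ∈ (vv A ε).support, t.2 < 2 ^ t.1 := by
  intro t ht
  have h := Finsupp.mem_support_iff.1 ht
  by_contra hc
  apply h
  rw [vv_apply]
  exact Finset.sum_eq_zero fun k _ => by rw [uu_apply_zero k t hc, mul_zero]

lemma admissible_empty : AdmissibleD ∅ := ⟨0, 0, le_rfl, by simp, by simp⟩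

lemma jh_le_l1 (x : (ℕ × ℕ) →₀ ℝ) :
    ∀ r ∈ {r : ℝ | ∃ F : Finset (Finset (ℕ × ℕ)), AdmissibleD F ∧
      r = ∑ S ∈ F, |∑ t ∈ S, x t|}, r ≤ ∑ t ∈ x.support, |x t| := by
  rintro r ⟨F, ⟨p, q, hpq, hseg, hdis⟩, rfl⟩
  have hdisj : (↑F : Set (Finset (ℕ × ℕ))).PairwiseDisjoint id := by
    intro S hS S' hS' hne
    exact hdis S hS S' hS' hne
  calc ∑ S ∈ F, |∑ t ∈ S, x t| ≤ ∑ S ∈ F, ∑ t ∈ S, |x t| :=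
        Finset.sum_le_sum fun S _ => Finset.abs_sum_le_sum_abs _ _
    _ = ∑ t ∈ F.biUnion id, |x t| := (Finset.sum_biUnion hdisj).symm
    _ = ∑ t ∈ (F.biUnion id) ∩ x.support, |x t| := by
        refine (Finset.sum_subset Finset.inter_subset_left fun t ht hnt => ?_).symm
        have : t ∉ x.support := fun hc => hnt (Finset.mem_inter.2 ⟨ht, hc⟩)
        rw [Finsupp.notMem_support_iff.1 this, abs_zero]
    _ ≤ ∑ t ∈ x.support, |x t| :=
        Finset.sum_le_sum_of_subset_of_nonneg Finset.inter_subset_right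
          (fun _ _ _ => abs_nonneg _)

lemma jh_bddAbove (x : (ℕ × ℕ) →₀ ℝ) :
    BddAbove {r : ℝ | ∃ F : Finset (Finset (ℕ × ℕ)), AdmissibleD F ∧
      r = ∑ S ∈ F, |∑ t ∈ S, x t|} :=
  ⟨∑ t ∈ x.support, |x t|, fun r hr => jh_le_l1 x r hr⟩

lemma card_admissible {F : Finset (Finset (ℕ × ℕ))} {p q : ℕ} (hpq : p ≤ q)
    (hseg : ∀ S ∈ F, IsPQSegD S p q)
    (hdis : ∀ S ∈ F, ∀ S' ∈ F, S ≠ S' → Disjoint S S') :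
    F.card ≤ 2 ^ p := by
  classical
  have key : F.card ≤ (Finset.range (2 ^ p)).card := by
    apply Finset.card_le_card_of_injOn
      (fun S => if h : ∃ t ∈ S, t.1 = p then h.choose.2 else 0)
    · intro S hS
      have hex : ∃ t ∈ S, t.1 = p := by
        obtain ⟨t, ⟨ht, htp⟩, -⟩ := (hseg S hS).2.2.1 p le_rfl hpq
        exact ⟨t, ht, htp⟩
      dsimp only
      rw [dif_pos hex]
      obtain ⟨h1, h2⟩ := hex.choose_spec
      have hv := (hseg S hS).1 _ h1
      rw [h2] at hv
      exact Finset.mem_range.2 hv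
    · intro S hS S' hS' hEq
      rw [Finset.mem_coe] at hS hS'
      have hex : ∃ t ∈ S, t.1 = p := by
        obtain ⟨t, ⟨ht, htp⟩, -⟩ := (hseg S hS).2.2.1 p le_rfl hpq
        exact ⟨t, ht, htp⟩
      have hex' : ∃ t ∈ S', t.1 = p := by
        obtain ⟨t, ⟨ht, htp⟩, -⟩ := (hseg S' hS').2.2.1 p le_rfl hpq
        exact ⟨t, ht, htp⟩
      dsimp only at hEq
      rw [dif_pos hex, dif_pos hex'] at hEq
      by_contra hne
      have hdisj := hdis S hS S' hS' hne
      obtain ⟨h1, h2⟩ := hex.choose_spec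
      obtain ⟨h1', h2'⟩ := hex'.choose_spec
      have heq2 : hex.choose = hex'.choose := Prod.ext (by rw [h2, h2']) hEq
      exact Finset.disjoint_left.1 hdisj h1 (heq2 ▸ h1')
  simpa using key

lemma seg_sum_levels {S : Finset (ℕ × ℕ)} {p q : ℕ} (h : IsPQSegD S p q)
    (c : ℕ → ℝ) : ∑ t ∈ S, c t.1 = ∑ j ∈ Finset.Icc p q, c j := by
  have hinj : ∀ s ∈ S, ∀ t ∈ S, s.1 = t.1 → s = t := by
    intro s hs t ht hst
    obtain ⟨u, -, hu⟩ := h.2.2.1 s.1 (h.2.1 s hs).1 (h.2.1 s hs).2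
    have h1 := hu s ⟨hs, rfl⟩
    have h2 := hu t ⟨ht, hst.symm⟩
    rw [h1, h2]
  have himg : S.image Prod.fst = Finset.Icc p q := by
    apply Finset.Subset.antisymm
    · intro j hj
      obtain ⟨t, ht, rfl⟩ := Finset.mem_image.1 hj
      exact Finset.mem_Icc.2 (h.2.1 t ht)
    · intro j hj
      rw [Finset.mem_Icc] at hj
      obtain ⟨t, ⟨ht, htj⟩, -⟩ := h.2.2.1 j hj.1 hj.2
      exact Finset.mem_image.2 ⟨t, ht, htj⟩
  rw [← himg]
  exact (Finset.sum_image hinj).symm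

lemma seg_sum_uu {S : Finset (ℕ × ℕ)} {p q : ℕ} (h : IsPQSegD S p q) (k : ℕ) :
    ∑ t ∈ S, uu k t = if k ∈ Finset.Icc p q then ((2 : ℝ) ^ k)⁻¹ else 0 := by
  have hc : ∀ t ∈ S, uu k t = if t.1 = k then ((2:ℝ)^k)⁻¹ else 0 := by
    intro t ht
    rw [uu_apply]
    by_cases htk : t.1 = k
    · rw [if_pos ⟨htk, htk ▸ (h.1 t ht)⟩, if_pos htk]
    · rw [if_neg (fun hc => htk hc.1), if_neg htk]
  calc ∑ t ∈ S, uu k t = ∑ t ∈ S, (if t.1 = k then ((2:ℝ)^k)⁻¹ else 0) :=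
        Finset.sum_congr rfl hc
    _ = ∑ j ∈ Finset.Icc p q, (if j = k then ((2:ℝ)^k)⁻¹ else 0) :=
        seg_sum_levels h (fun j => if j = k then ((2:ℝ)^k)⁻¹ else 0)
    _ = if k ∈ Finset.Icc p q then ((2:ℝ)^k)⁻¹ else 0 := Finset.sum_ite_eq' _ _ _

lemma geom_icc (p q : ℕ) : ∑ j ∈ Finset.Icc p q, ((2:ℝ)^j)⁻¹ ≤ 2 * ((2:ℝ)^p)⁻¹ := by
  rw [← Finset.Ico_add_one_right_eq_Icc, Finset.sum_Ico_eq_sum_range]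
  have h1 : ∀ i ∈ Finset.range (q + 1 - p), ((2:ℝ)^(p+i))⁻¹ = ((2:ℝ)^p)⁻¹ * ((1:ℝ)/2)^i := by
    intro i _
    rw [pow_add, mul_inv, one_div, inv_pow]
  rw [Finset.sum_congr rfl h1, ← Finset.mul_sum]
  calc ((2:ℝ)^p)⁻¹ * ∑ i ∈ Finset.range (q+1-p), ((1:ℝ)/2)^i
      ≤ ((2:ℝ)^p)⁻¹ * 2 := by
        apply mul_le_mul_of_nonneg_left (sum_geometric_two_le _) (by positivity)
    _ = 2 * ((2:ℝ)^p)⁻¹ := mul_comm _ _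

lemma jhNorm_vv_le (A : Finset ℕ) (ε : ℕ → ℝ) (hε : ∀ k, |ε k| ≤ 1) :
    jhNorm (vv A ε) ≤ 2 := by
  apply Real.sSup_le _ (by norm_num)
  rintro r ⟨F, ⟨p, q, hpq, hseg, hdis⟩, rfl⟩
  have hterm : ∀ S ∈ F, |∑ t ∈ S, vv A ε t| ≤ 2 * ((2:ℝ)^p)⁻¹ := by
    intro S hS
    have heq : ∑ t ∈ S, vv A ε t
        = ∑ j ∈ Finset.Icc p q, (if j ∈ A then ε j * ((2:ℝ)^j)⁻¹ else 0) := by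
      calc ∑ t ∈ S, vv A ε t
          = ∑ t ∈ S, (if t.1 ∈ A then ε t.1 * ((2:ℝ)^t.1)⁻¹ else 0) :=
            Finset.sum_congr rfl fun t ht => vv_apply_valid A ε t ((hseg S hS).1 t ht)
        _ = ∑ j ∈ Finset.Icc p q, (if j ∈ A then ε j * ((2:ℝ)^j)⁻¹ else 0) :=
            seg_sum_levels (hseg S hS) (fun j => if j ∈ A then ε j * ((2:ℝ)^j)⁻¹ else 0)
    rw [heq]
    calc |∑ j ∈ Finset.Icc p q, (if j ∈ A then ε j * ((2:ℝ)^j)⁻¹ else 0)|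
        ≤ ∑ j ∈ Finset.Icc p q, |if j ∈ A then ε j * ((2:ℝ)^j)⁻¹ else 0| :=
          Finset.abs_sum_le_sum_abs _ _
      _ ≤ ∑ j ∈ Finset.Icc p q, ((2:ℝ)^j)⁻¹ := by
          apply Finset.sum_le_sum
          intro j _
          by_cases hj : j ∈ A
          · rw [if_pos hj, abs_mul]
            have h2 : |((2:ℝ)^j)⁻¹| = ((2:ℝ)^j)⁻¹ := abs_of_pos (by positivity)
            rw [h2]
            exact mul_le_of_le_one_left (by positivity) (hε j)
          · rw [if_neg hj, abs_zero]; positivity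
      _ ≤ 2 * ((2:ℝ)^p)⁻¹ := geom_icc p q
  calc ∑ S ∈ F, |∑ t ∈ S, vv A ε t| ≤ ∑ S ∈ F, 2 * ((2:ℝ)^p)⁻¹ :=
        Finset.sum_le_sum hterm
    _ = F.card * (2 * ((2:ℝ)^p)⁻¹) := by rw [Finset.sum_const, nsmul_eq_mul]
    _ ≤ (2:ℝ)^p * (2 * ((2:ℝ)^p)⁻¹) := by
        apply mul_le_mul_of_nonneg_right _ (by positivity)
        calc (F.card : ℝ) ≤ ((2^p : ℕ) : ℝ) := by
              exact_mod_cast card_admissible hpq hseg hdis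
          _ = (2:ℝ)^p := by push_cast; ring
    _ = 2 := by
        rw [mul_comm (2:ℝ) _, ← mul_assoc, mul_inv_cancel₀ (by positivity), one_mul]

lemma jhNorm_nonneg (x : (ℕ × ℕ) →₀ ℝ) : 0 ≤ jhNorm x :=
  le_csSup (jh_bddAbove x) ⟨∅, admissible_empty, by simp⟩

lemma jhNorm_add_uu_le (x : (ℕ × ℕ) →₀ ℝ) (N k : ℕ)
    (hN : ∀ t ∈ x.support, t.1 ≤ N) (r : ℝ) (hr : |r| ≤ 1) :
    jhNorm (x + r • uu k) ≤ max (jhNorm x) 1 + (2:ℝ)^N * ((2:ℝ)^k)⁻¹ := by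
  have hRHS : (0:ℝ) ≤ max (jhNorm x) 1 + (2:ℝ)^N * ((2:ℝ)^k)⁻¹ := by
    have h1 : (1:ℝ) ≤ max (jhNorm x) 1 := le_max_right _ _
    have h2 : (0:ℝ) ≤ (2:ℝ)^N * ((2:ℝ)^k)⁻¹ := by positivity
    linarith
  apply Real.sSup_le _ hRHS
  rintro r' ⟨F, ⟨p, q, hpq, hseg, hdis⟩, rfl⟩
  have hsump : ∀ S ∈ F, ∑ t ∈ S, (x + r • uu k) t
      = (∑ t ∈ S, x t) + r * (if k ∈ Finset.Icc p q then ((2:ℝ)^k)⁻¹ else 0) := by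
    intro S hS
    have hpt : ∀ t ∈ S, (x + r • uu k) t = x t + r * uu k t := by
      intro t _
      simp [Finsupp.add_apply, Finsupp.smul_apply]
    rw [Finset.sum_congr rfl hpt, Finset.sum_add_distrib, ← Finset.mul_sum,
      seg_sum_uu (hseg S hS)]
  have hcard : (F.card : ℝ) ≤ (2:ℝ)^p := by
    calc (F.card : ℝ) ≤ ((2^p : ℕ) : ℝ) := by exact_mod_cast card_admissible hpq hseg hdis
      _ = (2:ℝ)^p := by push_cast; ring
  have huubd : |r * (if k ∈ Finset.Icc p q then ((2:ℝ)^k)⁻¹ else 0)|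
      ≤ (if k ∈ Finset.Icc p q then ((2:ℝ)^k)⁻¹ else 0) := by
    rw [abs_mul]
    by_cases hkI : k ∈ Finset.Icc p q
    · rw [if_pos hkI, abs_of_pos (by positivity : (0:ℝ) < ((2:ℝ)^k)⁻¹)]
      exact mul_le_of_le_one_left (by positivity) hr
    · rw [if_neg hkI, abs_zero, mul_zero]
  have hmain : ∑ S ∈ F, |∑ t ∈ S, (x + r • uu k) t|
      ≤ (∑ S ∈ F, |∑ t ∈ S, x t|)
        + F.card * (if k ∈ Finset.Icc p q then ((2:ℝ)^k)⁻¹ else 0) := by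
    calc ∑ S ∈ F, |∑ t ∈ S, (x + r • uu k) t|
        ≤ ∑ S ∈ F, (|∑ t ∈ S, x t| + (if k ∈ Finset.Icc p q then ((2:ℝ)^k)⁻¹ else 0)) := by
          apply Finset.sum_le_sum
          intro S hS
          rw [hsump S hS]
          calc |(∑ t ∈ S, x t) + r * (if k ∈ Finset.Icc p q then ((2:ℝ)^k)⁻¹ else 0)|
              ≤ |∑ t ∈ S, x t| + |r * (if k ∈ Finset.Icc p q then ((2:ℝ)^k)⁻¹ else 0)| :=
                abs_add_le _ _
            _ ≤ |∑ t ∈ S, x t| + (if k ∈ Finset.Icc p q then ((2:ℝ)^k)⁻¹ else 0) :=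
                add_le_add (le_refl _) huubd
      _ = (∑ S ∈ F, |∑ t ∈ S, x t|)
          + ∑ S ∈ F, (if k ∈ Finset.Icc p q then ((2:ℝ)^k)⁻¹ else 0) :=
          Finset.sum_add_distrib
      _ = (∑ S ∈ F, |∑ t ∈ S, x t|)
          + F.card * (if k ∈ Finset.Icc p q then ((2:ℝ)^k)⁻¹ else 0) := by
          rw [Finset.sum_const, nsmul_eq_mul]
  by_cases hpN : p ≤ N
  · have h1 : ∑ S ∈ F, |∑ t ∈ S, x t| ≤ jhNorm x :=
      le_csSup (jh_bddAbove x) ⟨F, ⟨p, q, hpq, hseg, hdis⟩, rfl⟩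
    have h2 : F.card * (if k ∈ Finset.Icc p q then ((2:ℝ)^k)⁻¹ else 0)
        ≤ (2:ℝ)^N * ((2:ℝ)^k)⁻¹ := by
      by_cases hkI : k ∈ Finset.Icc p q
      · rw [if_pos hkI]
        apply mul_le_mul_of_nonneg_right _ (by positivity)
        calc (F.card : ℝ) ≤ (2:ℝ)^p := hcard
          _ ≤ (2:ℝ)^N := pow_le_pow_right₀ one_le_two hpN
      · rw [if_neg hkI, mul_zero]; positivity
    have h3 : jhNorm x ≤ max (jhNorm x) 1 := le_max_left _ _
    linarith [hmain]
  · -- p > N : the x part vanishes on every segment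
    push_neg at hpN
    have hx0 : ∀ S ∈ F, ∑ t ∈ S, x t = 0 := by
      intro S hS
      apply Finset.sum_eq_zero
      intro t ht
      by_contra hxt
      have hmem : t ∈ x.support := Finsupp.mem_support_iff.2 hxt
      have := hN t hmem
      have := ((hseg S hS).2.1 t ht).1
      omega
    have hsum0 : ∑ S ∈ F, |∑ t ∈ S, x t| = 0 :=
      Finset.sum_eq_zero fun S hS => by rw [hx0 S hS, abs_zero]
    have h2 : F.card * (if k ∈ Finset.Icc p q then ((2:ℝ)^k)⁻¹ else 0) ≤ 1 := by
      by_cases hkI : k ∈ Finset.Icc p q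
      · rw [if_pos hkI]
        have hpk : p ≤ k := (Finset.mem_Icc.1 hkI).1
        calc (F.card : ℝ) * ((2:ℝ)^k)⁻¹ ≤ (2:ℝ)^p * ((2:ℝ)^k)⁻¹ :=
              mul_le_mul_of_nonneg_right hcard (by positivity)
          _ ≤ (2:ℝ)^k * ((2:ℝ)^k)⁻¹ :=
              mul_le_mul_of_nonneg_right (pow_le_pow_right₀ one_le_two hpk) (by positivity)
          _ = 1 := mul_inv_cancel₀ (by positivity)
      · rw [if_neg hkI, mul_zero]; norm_num
    have h3 : (1:ℝ) ≤ max (jhNorm x) 1 := le_max_right _ _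
    have h4 : (0:ℝ) ≤ (2:ℝ)^N * ((2:ℝ)^k)⁻¹ := by positivity
    linarith [hmain, hsum0.le, hsum0.ge]

lemma jhNorm_uu (k : ℕ) : jhNorm (uu k) = 1 := by
  apply le_antisymm
  · apply Real.sSup_le _ (by norm_num)
    rintro r ⟨F, ⟨p, q, hpq, hseg, hdis⟩, rfl⟩
    have hcard : (F.card : ℝ) ≤ (2:ℝ)^p := by
      calc (F.card : ℝ) ≤ ((2^p : ℕ) : ℝ) := by exact_mod_cast card_admissible hpq hseg hdis
        _ = (2:ℝ)^p := by push_cast; ring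
    have hterm : ∀ S ∈ F, |∑ t ∈ S, uu k t| = (if k ∈ Finset.Icc p q then ((2:ℝ)^k)⁻¹ else 0) := by
      intro S hS
      rw [seg_sum_uu (hseg S hS)]
      by_cases hkI : k ∈ Finset.Icc p q
      · rw [if_pos hkI]
        exact abs_of_pos (by positivity : (0:ℝ) < ((2:ℝ)^k)⁻¹)
      · rw [if_neg hkI]
        exact abs_zero
    rw [Finset.sum_congr rfl hterm, Finset.sum_const, nsmul_eq_mul]
    by_cases hkI : k ∈ Finset.Icc p q
    · rw [if_pos hkI]
      have hpk : p ≤ k := (Finset.mem_Icc.1 hkI).1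
      calc (F.card : ℝ) * ((2:ℝ)^k)⁻¹ ≤ (2:ℝ)^p * ((2:ℝ)^k)⁻¹ :=
            mul_le_mul_of_nonneg_right hcard (by positivity)
        _ ≤ (2:ℝ)^k * ((2:ℝ)^k)⁻¹ :=
            mul_le_mul_of_nonneg_right (pow_le_pow_right₀ one_le_two hpk) (by positivity)
        _ = 1 := mul_inv_cancel₀ (by positivity)
    · rw [if_neg hkI, mul_zero]; norm_num
  · apply le_csSup (jh_bddAbove (uu k))
    refine ⟨(Finset.range (2^k)).image (fun j => ({(k, j)} : Finset (ℕ × ℕ))),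
      ⟨k, k, le_rfl, ?_, ?_⟩, ?_⟩
    · rintro S hS
      obtain ⟨j, hj, rfl⟩ := Finset.mem_image.1 hS
      refine ⟨?_, ?_, ?_, ?_⟩
      · intro t ht
        rw [Finset.mem_singleton] at ht
        subst ht
        exact Finset.mem_range.1 hj
      · intro t ht
        rw [Finset.mem_singleton] at ht
        subst ht
        exact ⟨le_rfl, le_rfl⟩
      · intro m hm1 hm2
        have hmk : m = k := le_antisymm hm2 hm1
        subst hmk
        refine ⟨(m, j), ⟨Finset.mem_singleton_self _, rfl⟩, ?_⟩
        rintro t ⟨ht, -⟩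
        exact Finset.mem_singleton.1 ht
      · intro s hs t ht
        rw [Finset.mem_singleton] at hs ht
        subst hs; subst ht
        left
        exact ⟨le_rfl, by simp⟩
    · rintro S hS S' hS' hne
      obtain ⟨j, hj, rfl⟩ := Finset.mem_image.1 hS
      obtain ⟨j', hj', rfl⟩ := Finset.mem_image.1 hS'
      rw [Finset.disjoint_singleton]
      rintro h
      exact hne (by rw [h])
    · rw [Finset.sum_image ?hinj]
      case hinj =>
        intro a _ b _ hab
        have : (k, a) ∈ ({(k, b)} : Finset (ℕ × ℕ)) := (show ({(k, a)} : Finset (ℕ × ℕ)) = {(k, b)} from hab) ▸ Finset.mem_singleton_self _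
        exact (Prod.mk.injEq k a k b ▸ Finset.mem_singleton.1 this).2
      have hterm : ∀ j ∈ Finset.range (2^k), |∑ t ∈ ({(k, j)} : Finset (ℕ × ℕ)), uu k t|
          = ((2:ℝ)^k)⁻¹ := by
        intro j hj
        rw [Finset.sum_singleton, uu_apply, if_pos ⟨rfl, Finset.mem_range.1 hj⟩]
        exact abs_of_pos (by positivity)
      rw [Finset.sum_congr rfl hterm, Finset.sum_const, Finset.card_range, nsmul_eq_mul]
      push_cast
      rw [mul_inv_cancel₀ (by positivity : ((2:ℝ)^k) ≠ 0)]

lemma slice_nonempty {X : Type*} [NormedAddCommGroup X] [NormedSpace ℝ X]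
    (f : X →L[ℝ] ℝ) {α : ℝ} (hα : 0 < α) :
    ∃ z : X, ‖z‖ ≤ 1 ∧ f z > ‖f‖ - α := by
  by_contra h
  push_neg at h
  have hbound : ∀ z : X, ‖z‖ ≤ 1 → |f z| ≤ ‖f‖ - α := by
    intro z hz
    rw [abs_le]
    constructor
    · have h2 := h (-z) (by rwa [norm_neg])
      rw [map_neg] at h2
      linarith
    · exact h z hz
  have h0 : (0:ℝ) ≤ ‖f‖ - α := by
    have := hbound 0 (by simp)
    simpa using this
  have hle : ‖f‖ ≤ ‖f‖ - α := by
    refine f.opNorm_le_bound h0 fun z => ?_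
    rcases eq_or_ne z 0 with rfl | hz
    · simp
    · have hzpos : 0 < ‖z‖ := norm_pos_iff.2 hz
      have h1 : ‖(‖z‖⁻¹ • z)‖ ≤ 1 := by
        rw [norm_smul, norm_inv, norm_norm, inv_mul_cancel₀ (ne_of_gt hzpos)]
      have h2 := hbound _ h1
      rw [map_smul, smul_eq_mul, abs_mul, abs_inv, abs_norm] at h2
      rw [Real.norm_eq_abs]
      calc |f z| = ‖z‖ * (‖z‖⁻¹ * |f z|) := by field_simp
        _ ≤ ‖z‖ * (‖f‖ - α) := mul_le_mul_of_nonneg_left h2 (le_of_lt hzpos)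
        _ = (‖f‖ - α) * ‖z‖ := mul_comm _ _
  linarith

set_option maxHeartbeats 2000000 in
/-- The James–Hagler space `JH` has the strong diameter two property:
every convex combination of slices of its closed unit ball has diameter `2`. -/
theorem stmt5 (X : Type*) [NormedAddCommGroup X] [NormedSpace ℝ X] [CompleteSpace X]
    (e : ℕ × ℕ → X)
    (hnorm : ∀ x : (ℕ × ℕ) →₀ ℝ, (∀ t ∈ x.support, t.2 < 2 ^ t.1) →
      ‖∑ t ∈ x.support, x t • e t‖ = jhNorm x)
    (hdense : Dense (Submodule.span ℝ (e '' {t : ℕ × ℕ | t.2 < 2 ^ t.1}) : Set X))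
    (n : ℕ) (hn : 0 < n)
    (lam : Fin n → ℝ) (hlam : ∀ i, 0 ≤ lam i) (hsum : ∑ i, lam i = 1)
    (xs : Fin n → (X →L[ℝ] ℝ)) (α : ℝ) (hα : 0 < α) :
    Metric.diam {y : X | ∃ z : Fin n → X,
      (∀ i, ‖z i‖ ≤ 1 ∧ xs i (z i) > ‖xs i‖ - α) ∧ y = ∑ i, lam i • z i} = 2 := by
  classical
  haveI : Nonempty (Fin n) := Fin.pos_iff_nonempty.1 hn
  set lc := Finsupp.linearCombination ℝ e with hlcdef
  have hnorm' : ∀ x : (ℕ × ℕ) →₀ ℝ, (∀ t ∈ x.support, t.2 < 2 ^ t.1) →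
      ‖lc x‖ = jhNorm x := by
    intro x hx
    rw [hlcdef, Finsupp.linearCombination_apply, Finsupp.sum]
    exact hnorm x hx
  clear_value lc
  set Sset := {y : X | ∃ z : Fin n → X,
      (∀ i, ‖z i‖ ≤ 1 ∧ xs i (z i) > ‖xs i‖ - α) ∧ y = ∑ i, lam i • z i} with hSset
  have hmemnorm : ∀ y ∈ Sset, ‖y‖ ≤ 1 := by
    rintro y ⟨z, hz, rfl⟩
    calc ‖∑ i, lam i • z i‖ ≤ ∑ i, ‖lam i • z i‖ := norm_sum_le _ _
      _ ≤ ∑ i, lam i := by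
          apply Finset.sum_le_sum
          intro i _
          rw [norm_smul, Real.norm_eq_abs, abs_of_nonneg (hlam i)]
          exact mul_le_of_le_one_right (hlam i) (hz i).1
      _ = 1 := hsum
  have hbddS : Bornology.IsBounded Sset := by
    apply (Metric.isBounded_closedBall (x := (0:X)) (r := 1)).subset
    intro y hy
    rw [Metric.mem_closedBall, dist_zero_right]
    exact hmemnorm y hy
  have hdiamle : Metric.diam Sset ≤ 2 := by
    apply Metric.diam_le_of_forall_dist_le (by norm_num)
    intro y hy y' hy'
    calc dist y y' ≤ ‖y‖ + ‖y'‖ := dist_le_norm_add_norm _ _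
      _ ≤ 2 := by linarith [hmemnorm y hy, hmemnorm y' hy']
  refine le_antisymm hdiamle (le_of_forall_pos_le_add fun ε hε => ?_)
  -- choose slice points
  choose z hz1 hz2 using fun i => slice_nonempty (xs i) (hα := hα)
  -- margins
  set c : ℝ := Finset.univ.inf' Finset.univ_nonempty
      (fun i => xs i (z i) - (‖xs i‖ - α)) with hcdef
  have hc : 0 < c := by
    rw [hcdef, Finset.lt_inf'_iff]
    intro i _
    linarith [hz2 i]
  have hcle : ∀ i, c ≤ xs i (z i) - (‖xs i‖ - α) := by
    intro i
    rw [hcdef]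
    exact Finset.inf'_le _ (Finset.mem_univ i)
  set M : ℝ := Finset.univ.sup' Finset.univ_nonempty (fun i => ‖xs i‖) with hMdef
  have hM : ∀ i, ‖xs i‖ ≤ M := by
    intro i
    rw [hMdef]
    exact Finset.le_sup' (f := fun i => ‖xs i‖) (Finset.mem_univ i)
  have hM0 : 0 ≤ M := le_trans (norm_nonneg (xs (Classical.arbitrary (Fin n)))) (hM (Classical.arbitrary (Fin n)))
  clear_value c M
  set ε' : ℝ := min (ε/4) (c/(2*(M+1))) with hε'def
  have hε'pos : 0 < ε' := by
    apply lt_min (by linarith)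
    positivity
  have hε'1 : ε' ≤ ε/4 := min_le_left _ _
  have hε'2 : ε' ≤ c/(2*(M+1)) := min_le_right _ _
  have hε'M : ε' * (M+1) ≤ c/2 := by
    have h1 : (0:ℝ) < 2*(M+1) := by linarith
    rw [le_div_iff₀ h1] at hε'2
    nlinarith
  clear_value ε'
  set δ : ℝ := ε'/4 with hδdef
  have hδpos : 0 < δ := by rw [hδdef]; positivity
  clear_value δ
  -- approximation by finitely supported vectors
  choose w hwspan hwdist using fun i => hdense.exists_dist_lt (z i) hδpos
  have hrep : ∀ i, ∃ l : (ℕ × ℕ) →₀ ℝ,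
      l ∈ Finsupp.supported ℝ ℝ {t : ℕ × ℕ | t.2 < 2 ^ t.1} ∧ lc l = w i := by
    intro i
    rw [hlcdef]
    exact (Finsupp.mem_span_image_iff_linearCombination ℝ).1 (hwspan i)
  choose l hlsupp hlw using hrep
  have hlvalid : ∀ i, ∀ t ∈ (l i).support, t.2 < 2 ^ t.1 := by
    intro i t ht
    exact (Finsupp.mem_supported ℝ (l i)).1 (hlsupp i) ht
  set N : ℕ := Finset.univ.sup fun i => (l i).support.sup Prod.fst with hNdef
  have hNl : ∀ i, ∀ t ∈ (l i).support, t.1 ≤ N := by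
    intro i t ht
    rw [hNdef]
    calc t.1 ≤ (l i).support.sup Prod.fst := Finset.le_sup ht
      _ ≤ Finset.univ.sup fun i => (l i).support.sup Prod.fst := Finset.le_sup (f := fun i => (l i).support.sup Prod.fst) (Finset.mem_univ i)
  clear_value N
  -- the deep-level averaging vectors
  set U : ℕ → X := fun k => lc (uu k) with hUdef
  have hU1 : ∀ k, ‖U k‖ = 1 := by
    intro k
    rw [hUdef]
    dsimp only
    rw [hnorm' (uu k) (uu_valid k), jhNorm_uu]
  clear_value U
  -- weak smallness of the U k against the functionals
  have hsumU : ∀ i (A : Finset ℕ), ∑ k ∈ A, |xs i (U k)| ≤ 2 * ‖xs i‖ := by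
    intro i A
    set ε0 : ℕ → ℝ := fun k => if 0 ≤ xs i (U k) then 1 else -1 with hε0def
    have hε0 : ∀ k, |ε0 k| ≤ 1 := by
      intro k
      rw [hε0def]
      dsimp only
      split <;> norm_num
    have hlcvv : lc (vv A ε0) = ∑ k ∈ A, ε0 k • U k := by
      rw [vv, map_sum]
      exact Finset.sum_congr rfl fun k _ => by rw [map_smul, hUdef]
    have h1 : ∑ k ∈ A, |xs i (U k)| = xs i (lc (vv A ε0)) := by
      rw [hlcvv, map_sum]
      apply Finset.sum_congr rfl
      intro k _
      rw [map_smul, smul_eq_mul, hε0def]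
      dsimp only
      split
      case isTrue h => rw [abs_of_nonneg h, one_mul]
      case isFalse h => rw [abs_of_neg (lt_of_not_ge h)]; ring
    rw [h1]
    calc xs i (lc (vv A ε0)) ≤ |xs i (lc (vv A ε0))| := le_abs_self _
      _ ≤ ‖xs i‖ * ‖lc (vv A ε0)‖ := by
          rw [← Real.norm_eq_abs]
          exact (xs i).le_opNorm _
      _ ≤ ‖xs i‖ * 2 := by
          apply mul_le_mul_of_nonneg_left _ (norm_nonneg _)
          rw [hnorm' _ (vv_valid A ε0)]
          exact jhNorm_vv_le A ε0 hε0
      _ = 2 * ‖xs i‖ := mul_comm _ _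
  have hfin : ∀ i : Fin n, {k : ℕ | c/2 ≤ |xs i (U k)|}.Finite := by
    intro i
    by_contra hinf
    have hinf' : {k : ℕ | c/2 ≤ |xs i (U k)|}.Infinite := hinf
    obtain ⟨m, hm⟩ := exists_nat_gt (2 * ‖xs i‖ / (c/2))
    obtain ⟨A, hA1, hA2⟩ := hinf'.exists_subset_card_eq m
    have hge : (m : ℝ) * (c/2) ≤ ∑ k ∈ A, |xs i (U k)| := by
      calc (m:ℝ) * (c/2) = ∑ _k ∈ A, c/2 := by
            rw [Finset.sum_const, hA2, nsmul_eq_mul]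
        _ ≤ ∑ k ∈ A, |xs i (U k)| :=
            Finset.sum_le_sum fun k hk => hA1 (Finset.mem_coe.2 hk)
    have hc2 : (0:ℝ) < c/2 := by linarith
    rw [div_lt_iff₀ hc2] at hm
    linarith [hsumU i A]
  -- choose the deep level k
  have hfinU : (⋃ i : Fin n, {k : ℕ | c/2 ≤ |xs i (U k)|}).Finite :=
    Set.finite_iUnion hfin
  obtain ⟨K, hK⟩ := hfinU.bddAbove
  obtain ⟨m0, hm0⟩ := pow_unbounded_of_one_lt ((2:ℝ)^(N+1) / ε') one_lt_two
  set k : ℕ := max (max (K+1) m0) (N+1) with hkdef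
  have hknotbad : ∀ i, |xs i (U k)| < c/2 := by
    intro i
    by_contra hcon
    push_neg at hcon
    have hmem : k ∈ ⋃ i : Fin n, {k : ℕ | c/2 ≤ |xs i (U k)|} :=
      Set.mem_iUnion.2 ⟨i, hcon⟩
    have hle := hK hmem
    have hk1 : K + 1 ≤ k := le_trans (le_max_left _ _) (le_max_left _ _)
    omega
  have h2k : (2:ℝ)^N * ((2:ℝ)^k)⁻¹ ≤ ε'/2 := by
    have hmk : m0 ≤ k := le_trans (le_max_right _ _) (le_max_left _ _)
    have h1 : (2:ℝ)^m0 ≤ (2:ℝ)^k := pow_le_pow_right₀ one_le_two hmk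
    have h2 : (2:ℝ)^(N+1) < ε' * (2:ℝ)^k := by
      rw [div_lt_iff₀ hε'pos] at hm0
      calc (2:ℝ)^(N+1) < 2^m0 * ε' := hm0
        _ ≤ 2^k * ε' := mul_le_mul_of_nonneg_right h1 (le_of_lt hε'pos)
        _ = ε' * 2^k := mul_comm _ _
    have h3 : (0:ℝ) < (2:ℝ)^k := by positivity
    have h5 : (2:ℝ)^k * ((2:ℝ)^k)⁻¹ = 1 := mul_inv_cancel₀ (ne_of_gt h3)
    have h6 : (0:ℝ) < ((2:ℝ)^k)⁻¹ := by positivity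
    have h7 := mul_lt_mul_of_pos_right h2 h6
    rw [mul_assoc, h5, mul_one] at h7
    have h8 : (2:ℝ)^(N+1) * ((2:ℝ)^k)⁻¹ = 2 * ((2:ℝ)^N * ((2:ℝ)^k)⁻¹) := by ring
    rw [h8] at h7
    linarith
  clear_value k
  -- norm estimates
  have hopos : (0:ℝ) < 1 + ε' := by linarith
  have hnormpm : ∀ i, ∀ r : ℝ, |r| ≤ 1 → ‖z i + r • U k‖ ≤ 1 + ε' := by
    intro i r hr
    have hxvalid : ∀ t ∈ (l i + r • uu k).support, t.2 < 2 ^ t.1 := by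
      intro t ht
      have h1 := Finsupp.support_add ht
      rw [Finset.mem_union] at h1
      rcases h1 with h1 | h1
      · exact hlvalid i t h1
      · exact uu_valid k t (Finsupp.support_smul h1)
    have hlc2 : lc (l i + r • uu k) = w i + r • U k := by
      rw [map_add, map_smul, hlw i, hUdef]
    have h3 : ‖w i + r • U k‖ = jhNorm (l i + r • uu k) := by
      rw [← hlc2]
      exact hnorm' _ hxvalid
    have h4 : jhNorm (l i + r • uu k) ≤ max (jhNorm (l i)) 1 + (2:ℝ)^N * ((2:ℝ)^k)⁻¹ :=
      jhNorm_add_uu_le (l i) N k (hNl i) r hr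
    have h5 : jhNorm (l i) = ‖w i‖ := by
      rw [← hnorm' (l i) (hlvalid i), hlw i]
    have h9 : ‖z i - w i‖ ≤ δ := by
      rw [← dist_eq_norm]
      exact le_of_lt (hwdist i)
    have h6 : ‖w i‖ ≤ 1 + δ := by
      calc ‖w i‖ = ‖z i - (z i - w i)‖ := by congr 1; abel
        _ ≤ ‖z i‖ + ‖z i - w i‖ := norm_sub_le _ _
        _ ≤ 1 + δ := add_le_add (hz1 i) h9
    have h7 : max (jhNorm (l i)) 1 ≤ 1 + δ := by
      rw [h5]
      exact max_le h6 (by linarith)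
    have h8 : ‖z i + r • U k‖ ≤ ‖z i - w i‖ + ‖w i + r • U k‖ := by
      have heq : z i + r • U k = (z i - w i) + (w i + r • U k) := by abel
      rw [heq]
      exact norm_add_le _ _
    rw [hδdef] at *
    linarith [h3, h4, h7, h2k, h8, h9]
  -- slice membership of the perturbed points
  have hslice : ∀ i, ∀ r : ℝ, |r| = 1 →
      xs i ((1+ε')⁻¹ • (z i + r • U k)) > ‖xs i‖ - α := by
    intro i r hr
    have hU : |r * xs i (U k)| < c/2 := by
      rw [abs_mul, hr, one_mul]
      exact hknotbad i
    have hval : (‖xs i‖ - α) + c/2 ≤ xs i (z i + r • U k) := by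
      rw [map_add, map_smul, smul_eq_mul]
      have h1 : -(c/2) ≤ r * xs i (U k) := neg_le_of_abs_le (le_of_lt hU)
      have h2 := hcle i
      linarith
    rw [map_smul, smul_eq_mul]
    have hb : ‖xs i‖ - α ≤ M := by linarith [hM i, hα]
    have hkey : (‖xs i‖ - α) * (1+ε') < (‖xs i‖ - α) + c/2 := by
      nlinarith [mul_nonneg (by linarith : (0:ℝ) ≤ M - (‖xs i‖ - α)) (le_of_lt hε'pos),
        hε'M, hε'pos, hc]
    calc ‖xs i‖ - α = ((‖xs i‖ - α) * (1+ε')) * (1+ε')⁻¹ := by field_simp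
      _ < ((‖xs i‖ - α) + c/2) * (1+ε')⁻¹ :=
          mul_lt_mul_of_pos_right hkey (inv_pos.2 hopos)
      _ ≤ xs i (z i + r • U k) * (1+ε')⁻¹ :=
          mul_le_mul_of_nonneg_right hval (le_of_lt (inv_pos.2 hopos))
      _ = (1+ε')⁻¹ * xs i (z i + r • U k) := mul_comm _ _
  -- the two far-apart points
  have hnormsc : ∀ i, ∀ r : ℝ, |r| ≤ 1 → ‖(1+ε')⁻¹ • (z i + r • U k)‖ ≤ 1 := by
    intro i r hr
    rw [norm_smul, Real.norm_eq_abs, abs_of_pos (inv_pos.2 hopos)]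
    calc (1+ε')⁻¹ * ‖z i + r • U k‖ ≤ (1+ε')⁻¹ * (1+ε') :=
          mul_le_mul_of_nonneg_left (hnormpm i r hr) (le_of_lt (inv_pos.2 hopos))
      _ = 1 := inv_mul_cancel₀ (ne_of_gt hopos)
  have hyp : (∑ i, lam i • ((1+ε')⁻¹ • (z i + U k))) ∈ Sset := by
    refine ⟨fun i => (1+ε')⁻¹ • (z i + U k), fun i => ⟨?_, ?_⟩, rfl⟩
    · have := hnormsc i 1 (by norm_num)
      rwa [one_smul] at this
    · have := hslice i 1 (by norm_num)
      rwa [one_smul] at this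
  have hym : (∑ i, lam i • ((1+ε')⁻¹ • (z i - U k))) ∈ Sset := by
    refine ⟨fun i => (1+ε')⁻¹ • (z i - U k), fun i => ⟨?_, ?_⟩, rfl⟩
    · have := hnormsc i (-1) (by norm_num)
      rwa [neg_one_smul, ← sub_eq_add_neg] at this
    · have := hslice i (-1) (by norm_num)
      rwa [neg_one_smul, ← sub_eq_add_neg] at this
  have hdiff : (∑ i, lam i • ((1+ε')⁻¹ • (z i + U k)))
      - (∑ i, lam i • ((1+ε')⁻¹ • (z i - U k))) = (2 * (1+ε')⁻¹) • U k := by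
    rw [← Finset.sum_sub_distrib]
    have hterm : ∀ i : Fin n, lam i • ((1+ε')⁻¹ • (z i + U k))
        - lam i • ((1+ε')⁻¹ • (z i - U k)) = lam i • ((2 * (1+ε')⁻¹) • U k) := by
      intro i
      rw [← smul_sub, ← smul_sub]
      congr 1
      have heq : (z i + U k) - (z i - U k) = (2:ℝ) • U k := by
        rw [two_smul]; abel
      rw [heq, smul_smul, mul_comm]
    rw [Finset.sum_congr rfl (fun i _ => hterm i), ← Finset.sum_smul, hsum, one_smul]
  have hdist : dist (∑ i, lam i • ((1+ε')⁻¹ • (z i + U k)))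
      (∑ i, lam i • ((1+ε')⁻¹ • (z i - U k))) = 2 * (1+ε')⁻¹ := by
    rw [dist_eq_norm, hdiff, norm_smul, Real.norm_eq_abs, hU1 k, mul_one,
      abs_of_pos (by positivity)]
  have hdd := Metric.dist_le_diam_of_mem hbddS hyp hym
  rw [hdist] at hdd
  have hinv : (1+ε') * (1+ε')⁻¹ = 1 := mul_inv_cancel₀ (ne_of_gt hopos)
  have hfinal : 2 ≤ 2 * (1+ε')⁻¹ + ε := by
    nlinarith [hinv, hε'pos, hε'1, hε, inv_pos.2 hopos]
  linarith
end

section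
/- The norm of JH* is octahedral; equivalently, for every ε > 0 and every finite-dimensional subspace Y of JH* there exists f ∈ S_{JH*} with ‖λf + g‖ > (1−ε)(|λ| + ‖g‖) for all g ∈ Y and scalars λ. -/
set_option maxHeartbeats 1000000

open Metric

namespace JHOct

def jhSet (x : (ℕ × ℕ) →₀ ℝ) : Set ℝ :=
  {r : ℝ | ∃ F : Finset (Finset (ℕ × ℕ)), AdmissibleD F ∧
    r = ∑ S ∈ F, |∑ t ∈ S, x t|}

lemma jhNorm_eq (x : (ℕ × ℕ) →₀ ℝ) : jhNorm x = sSup (jhSet x) := rfl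

lemma zero_mem_jhSet (x : (ℕ × ℕ) →₀ ℝ) : (0:ℝ) ∈ jhSet x := by
  refine ⟨∅, ⟨0, 0, le_refl _, by simp, by simp⟩, by simp⟩

lemma sum_abs_le_l1 (x : (ℕ × ℕ) →₀ ℝ) (A : Finset (ℕ × ℕ)) :
    ∑ t ∈ A, |x t| ≤ ∑ t ∈ x.support, |x t| := by
  classical
  calc ∑ t ∈ A, |x t| = ∑ t ∈ A ∩ x.support, |x t| := by
        refine (Finset.sum_subset (Finset.inter_subset_left) ?_).symm
        intro t ht ht'
        simp only [Finset.mem_inter, ht, true_and] at ht'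
        have : x t = 0 := by
          by_contra h
          exact ht' (Finsupp.mem_support_iff.2 h)
        simp [this]
    _ ≤ ∑ t ∈ x.support, |x t| :=
        Finset.sum_le_sum_of_subset_of_nonneg Finset.inter_subset_right
          (fun _ _ _ => abs_nonneg _)

lemma pairwiseDisjoint_of_admissible {F : Finset (Finset (ℕ × ℕ))}
    (hF : AdmissibleD F) : (↑F : Set (Finset (ℕ × ℕ))).PairwiseDisjoint id := by
  obtain ⟨p, q, _, _, hdisj⟩ := hF
  intro S hS S' hS' hne
  exact hdisj S hS S' hS' hne

lemma sum_sum_abs_le_l1 {F : Finset (Finset (ℕ × ℕ))} (hF : AdmissibleD F)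
    (x : (ℕ × ℕ) →₀ ℝ) :
    ∑ S ∈ F, ∑ t ∈ S, |x t| ≤ ∑ t ∈ x.support, |x t| := by
  classical
  have := Finset.sum_biUnion (s := F) (t := id) (f := fun t => |x t|)
    (pairwiseDisjoint_of_admissible hF)
  simp only [id] at this
  rw [← this]
  exact sum_abs_le_l1 x _

lemma mem_jhSet_le_l1 {x : (ℕ × ℕ) →₀ ℝ} {r : ℝ} (hr : r ∈ jhSet x) :
    r ≤ ∑ t ∈ x.support, |x t| := by
  obtain ⟨F, hF, rfl⟩ := hr
  calc ∑ S ∈ F, |∑ t ∈ S, x t| ≤ ∑ S ∈ F, ∑ t ∈ S, |x t| :=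
        Finset.sum_le_sum fun S _ => Finset.abs_sum_le_sum_abs _ _
    _ ≤ _ := sum_sum_abs_le_l1 hF x

lemma jhSet_bddAbove (x : (ℕ × ℕ) →₀ ℝ) : BddAbove (jhSet x) :=
  ⟨_, fun _ hr => mem_jhSet_le_l1 hr⟩

lemma le_jhNorm {x : (ℕ × ℕ) →₀ ℝ} {r : ℝ} (hr : r ∈ jhSet x) : r ≤ jhNorm x :=
  le_csSup (jhSet_bddAbove x) hr

lemma jhNorm_le {x : (ℕ × ℕ) →₀ ℝ} {B : ℝ} (hB : ∀ r ∈ jhSet x, r ≤ B) :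
    jhNorm x ≤ B :=
  csSup_le ⟨0, zero_mem_jhSet x⟩ hB

lemma jhNorm_nonneg (x : (ℕ × ℕ) →₀ ℝ) : 0 ≤ jhNorm x := le_jhNorm (zero_mem_jhSet x)

lemma jhNorm_le_l1 (x : (ℕ × ℕ) →₀ ℝ) : jhNorm x ≤ ∑ t ∈ x.support, |x t| :=
  jhNorm_le fun _ hr => mem_jhSet_le_l1 hr

lemma singleton_seg {t : ℕ × ℕ} (ht : t.2 < 2 ^ t.1) : IsPQSegD {t} t.1 t.1 := by
  refine ⟨by simpa using ht, by simp, ?_, by simp [dLe]⟩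
  intro k hk hk'
  refine ⟨t, by simp [le_antisymm hk' hk], ?_⟩
  rintro s ⟨hs, _⟩
  simpa using hs

lemma abs_apply_le_jhNorm {x : (ℕ × ℕ) →₀ ℝ} {t : ℕ × ℕ} (ht : t.2 < 2 ^ t.1) :
    |x t| ≤ jhNorm x := by
  refine le_jhNorm ⟨{{t}}, ⟨t.1, t.1, le_refl _, ?_, ?_⟩, by simp⟩
  · intro S hS; simp only [Finset.mem_singleton] at hS; subst hS; exact singleton_seg ht
  · intro S hS S' hS' hne
    simp only [Finset.mem_singleton] at hS hS'; subst hS; subst hS'; exact absurd rfl hne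


lemma seg_levels_injOn {S : Finset (ℕ × ℕ)} {p q : ℕ} (hS : IsPQSegD S p q) :
    Set.InjOn (fun t : ℕ × ℕ => t.1) ↑S := by
  intro s hs t ht hst
  simp only [Finset.mem_coe] at hs ht
  obtain ⟨_, hlev, huniq, _⟩ := hS
  obtain ⟨hp, hq⟩ := hlev s hs
  obtain ⟨u, _, hu⟩ := huniq s.1 hp hq
  have h1 : s = u := hu s ⟨hs, rfl⟩
  have h2 : t = u := hu t ⟨ht, hst.symm⟩
  rw [h1, h2]

lemma seg_exists_level {S : Finset (ℕ × ℕ)} {p q k : ℕ} (hS : IsPQSegD S p q)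
    (hk : p ≤ k) (hk' : k ≤ q) : ∃ t ∈ S, t.1 = k := by
  obtain ⟨u, ⟨hu, hu'⟩, _⟩ := hS.2.2.1 k hk hk'
  exact ⟨u, hu, hu'⟩

lemma seg_sum_pow_le {S : Finset (ℕ × ℕ)} {p q : ℕ} (hS : IsPQSegD S p q) :
    ∑ t ∈ S, ((1:ℝ)/2)^t.1 ≤ ((1:ℝ)/2)^p * 2 := by
  classical
  have h1 : ∑ t ∈ S, ((1:ℝ)/2)^t.1
      = ∑ k ∈ S.image (fun t : ℕ × ℕ => t.1), ((1:ℝ)/2)^k := by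
    rw [Finset.sum_image (fun a ha b hb h => seg_levels_injOn hS ha hb h)]
  rw [h1]
  have h2 : S.image (fun t : ℕ × ℕ => t.1) ⊆ Finset.Icc p q := by
    intro k hk
    simp only [Finset.mem_image] at hk
    obtain ⟨t, ht, rfl⟩ := hk
    exact Finset.mem_Icc.2 (hS.2.1 t ht)
  calc ∑ k ∈ S.image (fun t : ℕ × ℕ => t.1), ((1:ℝ)/2)^k
      ≤ ∑ k ∈ Finset.Icc p q, ((1:ℝ)/2)^k :=
        Finset.sum_le_sum_of_subset_of_nonneg h2
          (fun k _ _ => by positivity)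
    _ ≤ ((1:ℝ)/2)^p * 2 := by
        rw [show Finset.Icc p q = Finset.Ico p (q+1) from by rw [Finset.Ico_add_one_right_eq_Icc],
          Finset.sum_Ico_eq_sum_range]
        calc ∑ i ∈ Finset.range (q+1-p), ((1:ℝ)/2)^(p+i)
            = ((1:ℝ)/2)^p * ∑ i ∈ Finset.range (q+1-p), ((1:ℝ)/2)^i := by
              rw [Finset.mul_sum]; exact Finset.sum_congr rfl fun i _ => by rw [pow_add]
          _ ≤ _ := by
              have := sum_geometric_two_le (q+1-p)
              nlinarith [pow_pos (by norm_num : (0:ℝ) < 1/2) p]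

/-- The number of disjoint (p,q)-segments is at most `2^p`. -/
lemma card_admissible_le {F : Finset (Finset (ℕ × ℕ))} {p q : ℕ}
    (hseg : ∀ S ∈ F, IsPQSegD S p q) (hpq : p ≤ q)
    (hdisj : ∀ S ∈ F, ∀ S' ∈ F, S ≠ S' → Disjoint S S') :
    F.card ≤ 2^p := by
  classical
  have hch : ∀ S ∈ F, ∃ t : ℕ × ℕ, t ∈ S ∧ t.1 = p := by
    intro S hS
    obtain ⟨t, ht, ht'⟩ := seg_exists_level (hseg S hS) (le_refl p) hpq
    exact ⟨t, ht, ht'⟩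
  choose! φ hφ hφ' using hch
  have : F.card ≤ ((Finset.range (2^p)).image (fun j => (p, j))).card := by
    refine Finset.card_le_card_of_injOn φ ?_ ?_
    · intro S hS
      have h1 := (hseg S hS).1 _ (hφ S hS)
      rw [hφ' S hS] at h1
      simp only [Finset.mem_coe, Finset.mem_image, Finset.mem_range]
      refine ⟨(φ S).2, h1, ?_⟩
      have h2 : φ S = ((φ S).1, (φ S).2) := rfl
      rw [h2, hφ' S hS]
    · intro S hS S' hS' heq
      by_contra hne
      have hd := hdisj S hS S' hS' hne
      have h1 : φ S ∈ S := hφ S hS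
      have h2 : φ S ∈ S' := heq ▸ hφ S' hS'
      exact Finset.disjoint_left.1 hd h1 h2
  calc F.card ≤ _ := this
    _ ≤ (Finset.range (2^p)).card := Finset.card_image_le
    _ = 2^p := Finset.card_range _

/-- Estimate A: any finsupp dominated pointwise by `(1/2)^level` has norm at most 2. -/
lemma jhNorm_le_two {x : (ℕ × ℕ) →₀ ℝ} (hx : ∀ t, |x t| ≤ ((1:ℝ)/2)^t.1) :
    jhNorm x ≤ 2 := by
  refine jhNorm_le ?_
  rintro r ⟨F, ⟨p, q, hpq, hseg, hdisj⟩, rfl⟩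
  calc ∑ S ∈ F, |∑ t ∈ S, x t|
      ≤ ∑ S ∈ F, (((1:ℝ)/2)^p * 2) := by
        refine Finset.sum_le_sum fun S hS => ?_
        calc |∑ t ∈ S, x t| ≤ ∑ t ∈ S, |x t| := Finset.abs_sum_le_sum_abs _ _
          _ ≤ ∑ t ∈ S, ((1:ℝ)/2)^t.1 := Finset.sum_le_sum fun t _ => hx t
          _ ≤ _ := seg_sum_pow_le (hseg S hS)
    _ = F.card * (((1:ℝ)/2)^p * 2) := by rw [Finset.sum_const, nsmul_eq_mul]
    _ ≤ (2^p : ℝ) * (((1:ℝ)/2)^p * 2) := by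
        have := card_admissible_le hseg hpq hdisj
        have h2 : (F.card : ℝ) ≤ (2:ℝ)^p := by exact_mod_cast this
        nlinarith [pow_pos (by norm_num : (0:ℝ) < 1/2) p]
    _ = 2 := by
        rw [div_pow, one_pow]
        field_simp


/-- The "level `k` average" finitely supported function. -/
noncomputable def zeta (k : ℕ) : (ℕ × ℕ) →₀ ℝ :=
  Finsupp.onFinset ((Finset.range (2^k)).image (fun j => (k, j)))
    (fun t => if t.1 = k ∧ t.2 < 2^k then ((1:ℝ)/2)^k else 0)
    (by
      intro t ht
      simp only [ne_eq, ite_eq_right_iff, not_forall] at ht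
      obtain ⟨⟨h1, h2⟩, _⟩ := ht
      simp only [Finset.mem_image, Finset.mem_range]
      exact ⟨t.2, h2, by rw [← h1]⟩)

lemma zeta_apply (k : ℕ) (t : ℕ × ℕ) :
    zeta k t = if t.1 = k ∧ t.2 < 2^k then ((1:ℝ)/2)^k else 0 := rfl

lemma zeta_support_subset (k : ℕ) :
    ∀ t ∈ (zeta k).support, t.2 < 2 ^ t.1 := by
  intro t ht
  rw [Finsupp.mem_support_iff, zeta_apply] at ht
  simp only [ne_eq, ite_eq_right_iff, not_forall] at ht
  obtain ⟨⟨h1, h2⟩, _⟩ := ht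
  rw [h1]; exact h2

lemma zeta_abs_le (k : ℕ) (t : ℕ × ℕ) : |zeta k t| ≤ ((1:ℝ)/2)^t.1 := by
  rw [zeta_apply]
  split_ifs with h
  · rw [h.1, abs_of_nonneg (by positivity)]
  · simp only [abs_zero]; positivity

lemma zeta_level (k : ℕ) (t : ℕ × ℕ) (h : t.1 ≠ k) : zeta k t = 0 := by
  rw [zeta_apply, if_neg (fun hc => h hc.1)]

lemma zeta_support (k : ℕ) :
    (zeta k).support = (Finset.range (2^k)).image (fun j => (k, j)) := by
  apply Finset.Subset.antisymm
  · exact Finsupp.support_onFinset_subset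
  · intro t ht
    simp only [Finset.mem_image, Finset.mem_range] at ht
    obtain ⟨j, hj, rfl⟩ := ht
    rw [Finsupp.mem_support_iff, zeta_apply]
    have hc : ((k:ℕ), j).1 = k ∧ ((k:ℕ), j).2 < 2^k := ⟨rfl, hj⟩
    rw [if_pos hc]
    positivity

lemma zeta_l1 (k : ℕ) : ∑ t ∈ (zeta k).support, |zeta k t| = 1 := by
  rw [zeta_support]
  rw [Finset.sum_image (by intro a _ b _ h; exact (Prod.ext_iff.1 h).2)]
  have : ∀ j ∈ Finset.range (2^k), |zeta k (k, j)| = ((1:ℝ)/2)^k := by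
    intro j hj
    rw [zeta_apply]
    simp only [Finset.mem_range] at hj
    rw [if_pos ⟨rfl, hj⟩, abs_of_nonneg (by positivity)]
  rw [Finset.sum_congr rfl this, Finset.sum_const, Finset.card_range, nsmul_eq_mul]
  rw [div_pow, one_pow]
  field_simp
  norm_num

lemma jhNorm_zeta (k : ℕ) : jhNorm (zeta k) = 1 := by
  apply le_antisymm
  · calc jhNorm (zeta k) ≤ ∑ t ∈ (zeta k).support, |zeta k t| := jhNorm_le_l1 _
      _ = 1 := zeta_l1 k
  · -- the family of singletons at level k
    classical
    have hmem : (1:ℝ) ∈ jhSet (zeta k) := by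
      refine ⟨(Finset.range (2^k)).image (fun j => ({(k, j)} : Finset (ℕ × ℕ))), ?_, ?_⟩
      · refine ⟨k, k, le_refl _, ?_, ?_⟩
        · intro S hS
          simp only [Finset.mem_image, Finset.mem_range] at hS
          obtain ⟨j, hj, rfl⟩ := hS
          exact singleton_seg (by simpa using hj)
        · intro S hS S' hS' hne
          simp only [Finset.mem_image, Finset.mem_range] at hS hS'
          obtain ⟨j, hj, rfl⟩ := hS
          obtain ⟨j', hj', rfl⟩ := hS'
          have : j ≠ j' := fun h => hne (by rw [h])
          simp [Finset.disjoint_left, this]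
      · rw [Finset.sum_image (by
          intro a _ b _ h
          have := Finset.singleton_injective h
          exact (Prod.ext_iff.1 this).2)]
        have : ∀ j ∈ Finset.range (2^k), |∑ t ∈ ({(k, j)} : Finset (ℕ × ℕ)), zeta k t|
            = ((1:ℝ)/2)^k := by
          intro j hj
          simp only [Finset.mem_range] at hj
          rw [Finset.sum_singleton, zeta_apply, if_pos ⟨rfl, hj⟩,
            abs_of_nonneg (by positivity)]
        rw [Finset.sum_congr rfl this, Finset.sum_const, Finset.card_range, nsmul_eq_mul]
        rw [div_pow, one_pow]
        field_simp
        norm_num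
    exact le_jhNorm hmem

lemma seg_zeta_abs_sum_le {S : Finset (ℕ × ℕ)} {p q : ℕ} (hS : IsPQSegD S p q) (k : ℕ) :
    ∑ t ∈ S, |zeta k t| ≤ ((1:ℝ)/2)^k := by
  classical
  have h1 : ∀ t ∈ S, |zeta k t| ≤ if t.1 = k then ((1:ℝ)/2)^k else 0 := by
    intro t _
    rw [zeta_apply]
    by_cases h2 : t.1 = k ∧ t.2 < 2^k
    · rw [if_pos h2, if_pos h2.1, abs_of_nonneg (by positivity)]
    · rw [if_neg h2, abs_zero]
      split_ifs <;> [positivity; exact le_refl 0]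
  calc ∑ t ∈ S, |zeta k t| ≤ ∑ t ∈ S, (if t.1 = k then ((1:ℝ)/2)^k else 0) :=
        Finset.sum_le_sum h1
    _ = ∑ t ∈ S.filter (fun t => t.1 = k), ((1:ℝ)/2)^k := by rw [Finset.sum_filter]
    _ ≤ ((1:ℝ)/2)^k := by
        rw [Finset.sum_const, nsmul_eq_mul]
        have hcard : (S.filter (fun t => t.1 = k)).card ≤ 1 := by
          rw [Finset.card_le_one]
          intro a ha b hb
          simp only [Finset.mem_filter] at ha hb
          exact seg_levels_injOn hS ha.1 hb.1 (ha.2.trans hb.2.symm)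
        have : ((S.filter (fun t => t.1 = k)).card : ℝ) ≤ 1 := by exact_mod_cast hcard
        nlinarith [pow_pos (by norm_num : (0:ℝ) < 1/2) k]


/-- Truncation: if `c` is supported on levels `< N` and `F` is an admissible family with
window starting at `p < N`, the associated sum for `c` is at most `jhNorm c`. -/
lemma trunc_sum_le {c : (ℕ × ℕ) →₀ ℝ} {N : ℕ} (hsupp : ∀ t ∈ c.support, t.1 < N)
    {F : Finset (Finset (ℕ × ℕ))} {p q : ℕ} (hpq : p ≤ q)
    (hseg : ∀ S ∈ F, IsPQSegD S p q)
    (hdisj : ∀ S ∈ F, ∀ S' ∈ F, S ≠ S' → Disjoint S S') (hpN : p < N) :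
    ∑ S ∈ F, |∑ t ∈ S, c t| ≤ jhNorm c := by
  classical
  set q' := min q (N - 1) with hq'
  have hpq' : p ≤ q' := le_min hpq (by omega)
  set tr : Finset (ℕ × ℕ) → Finset (ℕ × ℕ) := fun S => S.filter (fun t => t.1 ≤ q') with htr
  have hc0 : ∀ t : ℕ × ℕ, ¬ t.1 < N → c t = 0 := by
    intro t ht
    by_contra h
    exact ht (hsupp t (Finsupp.mem_support_iff.2 h))
  -- sums are preserved by truncation
  have hsum : ∀ S ∈ F, ∑ t ∈ tr S, c t = ∑ t ∈ S, c t := by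
    intro S hS
    refine Finset.sum_subset (Finset.filter_subset _ _) ?_
    intro t ht ht'
    simp only [htr, Finset.mem_filter, ht, true_and, not_le] at ht'
    have hq : t.1 ≤ q := ((hseg S hS).2.1 t ht).2
    exact hc0 t (by omega)
  -- truncated segments are (p, q')-segments
  have hseg' : ∀ S ∈ F, IsPQSegD (tr S) p q' := by
    intro S hS
    obtain ⟨h1, h2, h3, h4⟩ := hseg S hS
    refine ⟨fun t ht => h1 t (Finset.mem_of_mem_filter t ht),
      fun t ht => ⟨(h2 t (Finset.mem_of_mem_filter t ht)).1,
        (Finset.mem_filter.1 ht).2⟩, ?_,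
      fun a ha b hb => h4 a (Finset.mem_of_mem_filter a ha) b (Finset.mem_of_mem_filter b hb)⟩
    intro k hk hk'
    obtain ⟨t, ⟨ht, htk⟩, huniq⟩ := h3 k hk (le_trans hk' (min_le_left _ _))
    refine ⟨t, ⟨Finset.mem_filter.2 ⟨ht, by rw [htk]; exact hk'⟩, htk⟩, ?_⟩
    rintro u ⟨hu, huk⟩
    exact huniq u ⟨Finset.mem_of_mem_filter u hu, huk⟩
  -- truncations are nonempty (they contain the level-p node)
  have hne : ∀ S ∈ F, (tr S).Nonempty := by
    intro S hS
    obtain ⟨t, ht, htp⟩ := seg_exists_level (hseg S hS) (le_refl p) hpq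
    exact ⟨t, Finset.mem_filter.2 ⟨ht, by rw [htp]; exact hpq'⟩⟩
  -- truncation is injective on F
  have hinj : ∀ S ∈ F, ∀ S' ∈ F, tr S = tr S' → S = S' := by
    intro S hS S' hS' h
    by_contra hne'
    obtain ⟨t, ht⟩ := hne S hS
    have ht1 : t ∈ S := Finset.mem_of_mem_filter t ht
    have ht2 : t ∈ S' := Finset.mem_of_mem_filter t (h ▸ ht)
    exact Finset.disjoint_left.1 (hdisj S hS S' hS' hne') ht1 ht2
  have hmem : (∑ S ∈ F, |∑ t ∈ S, c t|) ∈ jhSet c := by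
    refine ⟨F.image tr, ⟨p, q', hpq', ?_, ?_⟩, ?_⟩
    · intro S hS
      simp only [Finset.mem_image] at hS
      obtain ⟨S₀, hS₀, rfl⟩ := hS
      exact hseg' S₀ hS₀
    · intro A hA B hB hAB
      simp only [Finset.mem_image] at hA hB
      obtain ⟨SA, hSA, rfl⟩ := hA
      obtain ⟨SB, hSB, rfl⟩ := hB
      have hSAB : SA ≠ SB := fun h => hAB (by rw [h])
      exact Finset.disjoint_of_subset_left (Finset.filter_subset _ _)
        (Finset.disjoint_of_subset_right (Finset.filter_subset _ _)
          (hdisj SA hSA SB hSB hSAB))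
    · rw [Finset.sum_image hinj]
      exact (Finset.sum_congr rfl fun S hS => by rw [hsum S hS]).symm
  exact le_jhNorm hmem

/-- Estimate B. -/
lemma estimateB {c : (ℕ × ℕ) →₀ ℝ} {N k : ℕ} (hsupp : ∀ t ∈ c.support, t.1 < N)
    (hk : N ≤ k) {s : ℝ} (hs : |s| ≤ 1) :
    jhNorm (c + s • zeta k) ≤ max (jhNorm c) 1 + (2:ℝ)^N * ((1:ℝ)/2)^k := by
  refine jhNorm_le ?_
  rintro r ⟨F, ⟨p, q, hpq, hseg, hdisj⟩, rfl⟩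
  have hc0 : ∀ t : ℕ × ℕ, ¬ t.1 < N → c t = 0 := by
    intro t ht
    by_contra h
    exact ht (hsupp t (Finsupp.mem_support_iff.2 h))
  by_cases hpN : p < N
  · -- mixed case
    have h1 : ∀ S ∈ F, |∑ t ∈ S, (c + s • zeta k) t|
        ≤ |∑ t ∈ S, c t| + ((1:ℝ)/2)^k := by
      intro S hS
      have : ∑ t ∈ S, (c + s • zeta k) t = (∑ t ∈ S, c t) + s * ∑ t ∈ S, zeta k t := by
        rw [Finset.mul_sum, ← Finset.sum_add_distrib]
        exact Finset.sum_congr rfl fun t _ => by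
          simp [Finsupp.add_apply, Finsupp.smul_apply, smul_eq_mul]
      rw [this]
      calc |(∑ t ∈ S, c t) + s * ∑ t ∈ S, zeta k t|
          ≤ |∑ t ∈ S, c t| + |s * ∑ t ∈ S, zeta k t| := abs_add_le _ _
        _ ≤ |∑ t ∈ S, c t| + ((1:ℝ)/2)^k := by
            have h2 : |s * ∑ t ∈ S, zeta k t| ≤ ((1:ℝ)/2)^k := by
              rw [abs_mul]
              have h3 : |∑ t ∈ S, zeta k t| ≤ ((1:ℝ)/2)^k :=
                le_trans (Finset.abs_sum_le_sum_abs _ _) (seg_zeta_abs_sum_le (hseg S hS) k)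
              calc |s| * |∑ t ∈ S, zeta k t| ≤ 1 * ((1:ℝ)/2)^k :=
                  mul_le_mul hs h3 (abs_nonneg _) zero_le_one
                _ = ((1:ℝ)/2)^k := one_mul _
            linarith
    calc ∑ S ∈ F, |∑ t ∈ S, (c + s • zeta k) t|
        ≤ ∑ S ∈ F, (|∑ t ∈ S, c t| + ((1:ℝ)/2)^k) := Finset.sum_le_sum h1
      _ = (∑ S ∈ F, |∑ t ∈ S, c t|) + F.card * ((1:ℝ)/2)^k := by
          rw [Finset.sum_add_distrib, Finset.sum_const, nsmul_eq_mul]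
      _ ≤ jhNorm c + (2:ℝ)^N * ((1:ℝ)/2)^k := by
          have hA := trunc_sum_le hsupp hpq hseg hdisj hpN
          have hB : (F.card : ℝ) * ((1:ℝ)/2)^k ≤ (2:ℝ)^N * ((1:ℝ)/2)^k := by
            have h4 : (F.card : ℝ) ≤ (2:ℝ)^N := by
              have := card_admissible_le hseg hpq hdisj
              have h5 : (F.card : ℝ) ≤ (2:ℝ)^p := by exact_mod_cast this
              calc (F.card : ℝ) ≤ (2:ℝ)^p := h5
                _ ≤ (2:ℝ)^N := pow_le_pow_right₀ (by norm_num) (le_of_lt hpN)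
            exact mul_le_mul_of_nonneg_right h4 (by positivity)
          linarith
      _ ≤ max (jhNorm c) 1 + (2:ℝ)^N * ((1:ℝ)/2)^k := by
          have := le_max_left (jhNorm c) 1
          linarith
  · -- deep case: `c` vanishes on the window
    have h1 : ∀ S ∈ F, ∑ t ∈ S, (c + s • zeta k) t = s * ∑ t ∈ S, zeta k t := by
      intro S hS
      have : ∑ t ∈ S, (c + s • zeta k) t = (∑ t ∈ S, c t) + s * ∑ t ∈ S, zeta k t := by
        rw [Finset.mul_sum, ← Finset.sum_add_distrib]
        exact Finset.sum_congr rfl fun t _ => by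
          simp [Finsupp.add_apply, Finsupp.smul_apply, smul_eq_mul]
      rw [this]
      have h2 : ∑ t ∈ S, c t = 0 := by
        refine Finset.sum_eq_zero fun t ht => ?_
        have := ((hseg S hS).2.1 t ht).1
        exact hc0 t (by omega)
      rw [h2, zero_add]
    calc ∑ S ∈ F, |∑ t ∈ S, (c + s • zeta k) t|
        = ∑ S ∈ F, |s * ∑ t ∈ S, zeta k t| :=
          Finset.sum_congr rfl fun S hS => by rw [h1 S hS]
      _ ≤ ∑ S ∈ F, ∑ t ∈ S, |zeta k t| := by
          refine Finset.sum_le_sum fun S hS => ?_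
          rw [abs_mul]
          calc |s| * |∑ t ∈ S, zeta k t| ≤ 1 * |∑ t ∈ S, zeta k t| :=
              mul_le_mul_of_nonneg_right hs (abs_nonneg _)
            _ = |∑ t ∈ S, zeta k t| := one_mul _
            _ ≤ ∑ t ∈ S, |zeta k t| := Finset.abs_sum_le_sum_abs _ _
      _ ≤ ∑ t ∈ (zeta k).support, |zeta k t| :=
          sum_sum_abs_le_l1 ⟨p, q, hpq, hseg, hdisj⟩ _
      _ = 1 := zeta_l1 k
      _ ≤ max (jhNorm c) 1 + (2:ℝ)^N * ((1:ℝ)/2)^k := by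
          have := le_max_right (jhNorm c) 1
          have h6 : (0:ℝ) ≤ (2:ℝ)^N * ((1:ℝ)/2)^k := by positivity
          linarith


/-- The level-`k` sum functional on finitely supported functions. -/
noncomputable def lvl (k : ℕ) : ((ℕ × ℕ) →₀ ℝ) →ₗ[ℝ] ℝ where
  toFun c := ∑ j ∈ Finset.range (2^k), c (k, j)
  map_add' := by intros a b; simp [Finsupp.add_apply, Finset.sum_add_distrib]
  map_smul' := by intros m a; simp [Finsupp.smul_apply, Finset.mul_sum]

lemma lvl_apply (k : ℕ) (c : (ℕ × ℕ) →₀ ℝ) :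
    lvl k c = ∑ j ∈ Finset.range (2^k), c (k, j) := rfl

lemma levelFamily_admissible (k : ℕ) :
    AdmissibleD ((Finset.range (2^k)).image (fun j => ({(k, j)} : Finset (ℕ × ℕ)))) := by
  refine ⟨k, k, le_refl _, ?_, ?_⟩
  · intro S hS
    simp only [Finset.mem_image, Finset.mem_range] at hS
    obtain ⟨j, hj, rfl⟩ := hS
    exact singleton_seg (by simpa using hj)
  · intro S hS S' hS' hne
    simp only [Finset.mem_image, Finset.mem_range] at hS hS'
    obtain ⟨j, hj, rfl⟩ := hS
    obtain ⟨j', hj', rfl⟩ := hS'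
    have : j ≠ j' := fun h => hne (by rw [h])
    simp [Finset.disjoint_left, this]

lemma abs_lvl_le (k : ℕ) (c : (ℕ × ℕ) →₀ ℝ) : |lvl k c| ≤ jhNorm c := by
  classical
  rw [lvl_apply]
  have hmem : (∑ j ∈ Finset.range (2^k), |c (k, j)|) ∈ jhSet c := by
    refine ⟨(Finset.range (2^k)).image (fun j => ({(k, j)} : Finset (ℕ × ℕ))),
      levelFamily_admissible k, ?_⟩
    rw [Finset.sum_image (by
      intro a _ b _ h
      have := Finset.singleton_injective h
      exact (Prod.ext_iff.1 this).2)]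
    exact Finset.sum_congr rfl fun j _ => by rw [Finset.sum_singleton]
  calc |∑ j ∈ Finset.range (2^k), c (k, j)| ≤ ∑ j ∈ Finset.range (2^k), |c (k, j)| :=
      Finset.abs_sum_le_sum_abs _ _
    _ ≤ jhNorm c := le_jhNorm hmem

lemma lvl_zeta (k : ℕ) : lvl k (zeta k) = 1 := by
  rw [lvl_apply]
  have : ∀ j ∈ Finset.range (2^k), zeta k (k, j) = ((1:ℝ)/2)^k := by
    intro j hj
    simp only [Finset.mem_range] at hj
    rw [zeta_apply, if_pos ⟨rfl, hj⟩]
  rw [Finset.sum_congr rfl this, Finset.sum_const, Finset.card_range, nsmul_eq_mul]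
  rw [div_pow, one_pow]
  field_simp
  norm_num

section Main

variable {X : Type*} [NormedAddCommGroup X] [NormedSpace ℝ X] [CompleteSpace X]
variable (e : ℕ × ℕ → X)

/-- The tree. -/
def TT : Set (ℕ × ℕ) := {t : ℕ × ℕ | t.2 < 2 ^ t.1}

noncomputable def Phi : ((ℕ × ℕ) →₀ ℝ) →ₗ[ℝ] X := Finsupp.linearCombination ℝ e

lemma Phi_norm (hnorm : ∀ x : (ℕ × ℕ) →₀ ℝ, (∀ t ∈ x.support, t.2 < 2 ^ t.1) →
      ‖∑ t ∈ x.support, x t • e t‖ = jhNorm x)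
    (c : (ℕ × ℕ) →₀ ℝ) (hc : ∀ t ∈ c.support, t.2 < 2 ^ t.1) :
    ‖Phi e c‖ = jhNorm c := by
  rw [Phi, Finsupp.linearCombination_apply, Finsupp.sum]
  exact hnorm c hc

/-- Construction of the level-`k` functional on `X`. -/
lemma exists_f (hnorm : ∀ x : (ℕ × ℕ) →₀ ℝ, (∀ t ∈ x.support, t.2 < 2 ^ t.1) →
      ‖∑ t ∈ x.support, x t • e t‖ = jhNorm x)
    (hdense : Dense (Submodule.span ℝ (e '' TT) : Set X)) (k : ℕ) :
    ∃ f : X →L[ℝ] ℝ,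
      (∀ c ∈ Finsupp.supported ℝ ℝ TT, f (Phi e c) = lvl k c) ∧ (∀ x, |f x| ≤ ‖x‖) := by
  classical
  set p : Submodule ℝ X := Submodule.span ℝ (e '' TT) with hp
  set Φ'' : ↥(Finsupp.supported ℝ ℝ TT) →ₗ[ℝ] X :=
    (Phi e).comp (Finsupp.supported ℝ ℝ TT).subtype with hΦ''
  have hrange : LinearMap.range Φ'' = p := by
    rw [hΦ'', LinearMap.range_comp, Submodule.range_subtype, hp]
    exact (Finsupp.span_image_eq_map_linearCombination ℝ TT).symm
  have hzero : ∀ d : ↥(Finsupp.supported ℝ ℝ TT), Φ'' d = 0 → d = 0 := by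
    intro d hd
    have hds : ∀ t ∈ (d : (ℕ × ℕ) →₀ ℝ).support, t.2 < 2 ^ t.1 := by
      intro t ht
      exact (Finsupp.mem_supported ℝ (d : (ℕ × ℕ) →₀ ℝ)).1 d.2 ht
    have h0 : jhNorm (d : (ℕ × ℕ) →₀ ℝ) = 0 := by
      rw [← Phi_norm e hnorm _ hds]
      show ‖Φ'' d‖ = 0
      rw [hd, norm_zero]
    have : (d : (ℕ × ℕ) →₀ ℝ) = 0 := by
      ext t
      by_cases ht : t ∈ (d : (ℕ × ℕ) →₀ ℝ).support
      · have h1 := abs_apply_le_jhNorm (x := (d : (ℕ × ℕ) →₀ ℝ)) (hds t ht)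
        rw [h0] at h1
        have := abs_nonneg ((d : (ℕ × ℕ) →₀ ℝ) t)
        simpa using le_antisymm h1 (abs_nonneg _)
      · simpa using Finsupp.notMem_support_iff.1 ht
    exact Subtype.ext this
  have hinj : Function.Injective Φ'' := by
    intro a b hab
    have h := hzero (a - b) (by rw [map_sub Φ'', hab, sub_self])
    exact sub_eq_zero.1 h
  set equiv2 : ↥(Finsupp.supported ℝ ℝ TT) ≃ₗ[ℝ] ↥p :=
    (LinearEquiv.ofInjective Φ'' hinj).trans (LinearEquiv.ofEq _ _ hrange) with hequiv2
  have hcoe : ∀ d : ↥(Finsupp.supported ℝ ℝ TT), ((equiv2 d : ↥p) : X) = Φ'' d :=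
    fun d => rfl
  set L : ↥p →ₗ[ℝ] ℝ :=
    ((lvl k).comp (Finsupp.supported ℝ ℝ TT).subtype).comp equiv2.symm.toLinearMap with hL
  have hbound : ∀ y : ↥p, |L y| ≤ ‖y‖ := by
    intro y
    set d := equiv2.symm y with hd
    have hyd : (y : X) = Φ'' d := by
      rw [← hcoe d, hd, equiv2.apply_symm_apply]
    have hds : ∀ t ∈ (d : (ℕ × ℕ) →₀ ℝ).support, t.2 < 2 ^ t.1 := by
      intro t ht
      exact (Finsupp.mem_supported ℝ (d : (ℕ × ℕ) →₀ ℝ)).1 d.2 ht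
    have h1 : L y = lvl k (d : (ℕ × ℕ) →₀ ℝ) := rfl
    calc |L y| = |lvl k (d : (ℕ × ℕ) →₀ ℝ)| := by rw [h1]
      _ ≤ jhNorm (d : (ℕ × ℕ) →₀ ℝ) := abs_lvl_le _ _
      _ = ‖Phi e (d : (ℕ × ℕ) →₀ ℝ)‖ := (Phi_norm e hnorm _ hds).symm
      _ = ‖(y : X)‖ := by rw [hyd]; rfl
      _ = ‖y‖ := (Submodule.coe_norm y).symm
  set f₀ : ↥p →L[ℝ] ℝ := LinearMap.mkContinuous L 1 (fun y => by
    rw [Real.norm_eq_abs, one_mul]; exact hbound y) with hf₀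
  have hdr : DenseRange (⇑p.subtypeL : ↥p → X) := by
    have : Set.range (⇑p.subtypeL : ↥p → X) = (p : Set X) := Subtype.range_coe
    rw [DenseRange, this]
    exact hdense
  have hui : IsUniformInducing (⇑p.subtypeL : ↥p → X) :=
    isUniformEmbedding_subtype_val.isUniformInducing
  set f : X →L[ℝ] ℝ := f₀.extend p.subtypeL with hf
  have hfp : ∀ y : ↥p, f (y : X) = f₀ y := by
    intro y
    exact ContinuousLinearMap.extend_eq f₀ hdr hui y
  refine ⟨f, ?_, ?_⟩
  · intro c hc
    have h1 : Phi e c = ((equiv2 ⟨c, hc⟩ : ↥p) : X) := by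
      rw [hcoe]; rfl
    rw [h1, hfp]
    show L (equiv2 ⟨c, hc⟩) = lvl k c
    rw [hL]
    simp only [LinearMap.comp_apply, LinearEquiv.coe_toLinearMap, LinearEquiv.symm_apply_apply]
    rfl
  · intro x
    have hcl : IsClosed {x : X | |f x| ≤ ‖x‖} :=
      isClosed_le (continuous_abs.comp f.continuous) continuous_norm
    have hsub : (p : Set X) ⊆ {x : X | |f x| ≤ ‖x‖} := by
      intro x hx
      have h1 : f x = f₀ ⟨x, hx⟩ := hfp ⟨x, hx⟩
      have h2 : |f₀ ⟨x, hx⟩| ≤ ‖(⟨x, hx⟩ : ↥p)‖ := hbound _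
      rw [Set.mem_setOf_eq, h1]
      calc |f₀ ⟨x, hx⟩| ≤ ‖(⟨x, hx⟩ : ↥p)‖ := h2
        _ = ‖x‖ := Submodule.coe_norm _
    have h3 : closure (p : Set X) ⊆ {x : X | |f x| ≤ ‖x‖} :=
      closure_minimal hsub hcl
    exact h3 (by rw [hdense.closure_eq]; trivial)


/-- Sum over range K of |zeta k t| is at most `(1/2)^t.1`. -/
lemma sum_zeta_abs_le (K : ℕ) (t : ℕ × ℕ) :
    ∑ k ∈ Finset.range K, |zeta k t| ≤ ((1:ℝ)/2)^t.1 := by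
  classical
  have h1 : ∀ k ∈ Finset.range K, |zeta k t| ≤ if k = t.1 then ((1:ℝ)/2)^t.1 else 0 := by
    intro k _
    by_cases h : k = t.1
    · rw [if_pos h]; exact zeta_abs_le k t
    · rw [if_neg h, zeta_level k t (fun hc => h hc.symm), abs_zero]
  calc ∑ k ∈ Finset.range K, |zeta k t|
      ≤ ∑ k ∈ Finset.range K, (if k = t.1 then ((1:ℝ)/2)^t.1 else 0) :=
        Finset.sum_le_sum h1
    _ ≤ ((1:ℝ)/2)^t.1 := by
        rw [Finset.sum_ite_eq' (Finset.range K) t.1 (fun _ => ((1:ℝ)/2)^t.1)]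
        split_ifs
        · exact le_refl _
        · positivity

/-- Key summability estimate: partial sums of `|g (Phi e (zeta k))|` are bounded by `2‖g‖`. -/
lemma sum_abs_g_Z_le (hnorm : ∀ x : (ℕ × ℕ) →₀ ℝ, (∀ t ∈ x.support, t.2 < 2 ^ t.1) →
      ‖∑ t ∈ x.support, x t • e t‖ = jhNorm x)
    (g : X →L[ℝ] ℝ) (K : ℕ) :
    ∑ k ∈ Finset.range K, |g (Phi e (zeta k))| ≤ 2 * ‖g‖ := by
  classical
  set s : ℕ → ℝ := fun k => if 0 ≤ g (Phi e (zeta k)) then (1:ℝ) else -1 with hs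
  have habs : ∀ k, |s k| = 1 := by
    intro k
    by_cases h : 0 ≤ g (Phi e (zeta k)) <;> simp [hs, h]
  have hsk : ∀ k, s k * g (Phi e (zeta k)) = |g (Phi e (zeta k))| := by
    intro k
    by_cases h : 0 ≤ g (Phi e (zeta k))
    · rw [hs]; simp only [if_pos h, one_mul, abs_of_nonneg h]
    · rw [hs]; simp only [if_neg h, neg_one_mul, abs_of_neg (lt_of_not_ge h)]
  set w : (ℕ × ℕ) →₀ ℝ := ∑ k ∈ Finset.range K, s k • zeta k with hw
  have hwsupp : ∀ t ∈ w.support, t.2 < 2 ^ t.1 := by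
    intro t ht
    have := Finsupp.support_finset_sum ht
    simp only [Finset.mem_biUnion] at this
    obtain ⟨k, _, hk⟩ := this
    exact zeta_support_subset k t (Finsupp.support_smul hk)
  have hwpt : ∀ t, |w t| ≤ ((1:ℝ)/2)^t.1 := by
    intro t
    have h1 : w t = ∑ k ∈ Finset.range K, s k * zeta k t := by
      rw [hw, Finsupp.finset_sum_apply]
      exact Finset.sum_congr rfl fun k _ => rfl
    rw [h1]
    calc |∑ k ∈ Finset.range K, s k * zeta k t|
        ≤ ∑ k ∈ Finset.range K, |s k * zeta k t| := Finset.abs_sum_le_sum_abs _ _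
      _ = ∑ k ∈ Finset.range K, |zeta k t| := by
          refine Finset.sum_congr rfl fun k _ => ?_
          rw [abs_mul, habs k, one_mul]
      _ ≤ ((1:ℝ)/2)^t.1 := sum_zeta_abs_le K t
  have hwnorm : ‖Phi e w‖ ≤ 2 := by
    rw [Phi_norm e hnorm w hwsupp]
    exact jhNorm_le_two hwpt
  have hPw : Phi e w = ∑ k ∈ Finset.range K, s k • Phi e (zeta k) := by
    rw [hw, map_sum]
    exact Finset.sum_congr rfl fun k _ => by rw [map_smul]
  calc ∑ k ∈ Finset.range K, |g (Phi e (zeta k))|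
      = ∑ k ∈ Finset.range K, s k * g (Phi e (zeta k)) :=
        (Finset.sum_congr rfl fun k _ => (hsk k)).symm
    _ = g (Phi e w) := by
        rw [hPw, map_sum]
        exact Finset.sum_congr rfl fun k _ => by rw [map_smul]; rfl
    _ ≤ |g (Phi e w)| := le_abs_self _
    _ ≤ ‖g‖ * ‖Phi e w‖ := by
        have := g.le_opNorm (Phi e w)
        rwa [Real.norm_eq_abs] at this
    _ ≤ ‖g‖ * 2 := by
        exact mul_le_mul_of_nonneg_left hwnorm (norm_nonneg g)
    _ = 2 * ‖g‖ := mul_comm _ _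

/-- Almost norming elements taken from the dense span. -/
lemma exists_norming (hnorm : ∀ x : (ℕ × ℕ) →₀ ℝ, (∀ t ∈ x.support, t.2 < 2 ^ t.1) →
      ‖∑ t ∈ x.support, x t • e t‖ = jhNorm x)
    (hdense : Dense (Submodule.span ℝ (e '' TT) : Set X))
    (g : X →L[ℝ] ℝ) (hg : ‖g‖ = 1) {δ : ℝ} (hδ : 0 < δ) :
    ∃ c : (ℕ × ℕ) →₀ ℝ, c ∈ Finsupp.supported ℝ ℝ TT ∧
      jhNorm c ≤ 1 + δ ∧ 1 - 2*δ ≤ g (Phi e c) := by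
  classical
  obtain ⟨x, hx1, hx2⟩ := g.exists_lt_apply_of_lt_opNorm (r := 1 - δ) (by rw [hg]; linarith)
  rw [Real.norm_eq_abs] at hx2
  set u : X := if 0 ≤ g x then x else -x with hu
  have hu1 : ‖u‖ < 1 := by
    rw [hu]; split_ifs <;> simpa using hx1
  have hu2 : 1 - δ < g u := by
    rw [hu]
    by_cases h : 0 ≤ g x
    · rw [if_pos h]; rwa [abs_of_nonneg h] at hx2
    · rw [if_neg h, map_neg]; rwa [abs_of_neg (lt_of_not_ge h)] at hx2
  have hmem : u ∈ closure (Submodule.span ℝ (e '' TT) : Set X) := by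
    rw [hdense.closure_eq]; trivial
  obtain ⟨v, hv1, hv2⟩ := Metric.mem_closure_iff.1 hmem δ hδ
  have hvmem : v ∈ Submodule.map (Phi e) (Finsupp.supported ℝ ℝ TT) := by
    show v ∈ Submodule.map (Finsupp.linearCombination ℝ e) (Finsupp.supported ℝ ℝ TT)
    rw [← Finsupp.span_image_eq_map_linearCombination ℝ TT]
    exact hv1
  obtain ⟨c, hc1, hc2⟩ := hvmem
  refine ⟨c, hc1, ?_, ?_⟩
  · have hcs : ∀ t ∈ c.support, t.2 < 2 ^ t.1 := fun t ht =>
      (Finsupp.mem_supported ℝ c).1 hc1 ht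
    have hPc : ‖Phi e c‖ = jhNorm c := Phi_norm e hnorm c hcs
    have : ‖v‖ ≤ ‖u‖ + δ := by
      have h1 : ‖v‖ ≤ ‖u‖ + ‖v - u‖ := by
        have := norm_add_le u (v - u)
        simpa using this
      have h2 : ‖v - u‖ ≤ δ := by
        rw [← dist_eq_norm, dist_comm]
        exact le_of_lt hv2
      linarith
    rw [← hPc, hc2]
    linarith
  · rw [hc2]
    have h1 : |g (v - u)| ≤ ‖v - u‖ := by
      have := g.le_opNorm (v - u)
      rw [Real.norm_eq_abs, hg, one_mul] at this
      exact this
    have h2 : ‖v - u‖ ≤ δ := by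
      rw [← dist_eq_norm, dist_comm]
      exact le_of_lt hv2
    have h3 : g v = g u + g (v - u) := by rw [← map_add, add_sub_cancel]
    have h4 : -δ ≤ g (v - u) := by
      have := neg_abs_le (g (v - u))
      linarith
    linarith

end Main

end JHOct

open JHOct

/-- The norm of `JH*` is octahedral: for every `ε > 0` and every
finite-dimensional subspace `Y` of `JH*` there is a norm-one `f ∈ JH*` with
`‖λ f + g‖ ≥ (1-ε)(|λ| + ‖g‖)` for all `g ∈ Y` and all scalars `λ`. -/
theorem stmt6 (X : Type*) [NormedAddCommGroup X] [NormedSpace ℝ X] [CompleteSpace X]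
    (e : ℕ × ℕ → X)
    (hnorm : ∀ x : (ℕ × ℕ) →₀ ℝ, (∀ t ∈ x.support, t.2 < 2 ^ t.1) →
      ‖∑ t ∈ x.support, x t • e t‖ = jhNorm x)
    (hdense : Dense (Submodule.span ℝ (e '' {t : ℕ × ℕ | t.2 < 2 ^ t.1}) : Set X)) :
    ∀ ε : ℝ, 0 < ε → ∀ Y : Submodule ℝ (X →L[ℝ] ℝ), FiniteDimensional ℝ Y →
      ∃ f : X →L[ℝ] ℝ, ‖f‖ = 1 ∧
        ∀ g ∈ Y, ∀ l : ℝ, (1 - ε) * (|l| + ‖g‖) ≤ ‖l • f + g‖ := by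
  classical
  intro ε hε Y hY
  haveI := hY
  have hdense' : Dense (Submodule.span ℝ (e '' TT) : Set X) := hdense
  set ε' := min ε (1/2) with hε'
  have hε'pos : 0 < ε' := lt_min hε (by norm_num)
  have hε'le : ε' ≤ 1/2 := min_le_right _ _
  set δ := ε'/9 with hδdef
  have hδpos : 0 < δ := by positivity
  have hδle : δ ≤ 1/18 := by rw [hδdef]; linarith
  have hcpt : IsCompact (Metric.sphere (0:↥Y) 1) := isCompact_sphere _ _
  obtain ⟨net, hnet_sub, hnet_fin, hnet_cov⟩ :=
    finite_approx_of_totallyBounded hcpt.totallyBounded δ hδpos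
  set netF := hnet_fin.toFinset with hnetF
  have hnet_mem : ∀ y ∈ netF, ‖(y : X →L[ℝ] ℝ)‖ = 1 := by
    intro y hy
    have h1 : y ∈ Metric.sphere (0:↥Y) 1 := hnet_sub (hnet_fin.mem_toFinset.1 hy)
    have h2 : ‖y‖ = 1 := (mem_sphere_zero_iff_norm (E := ↥Y)).1 h1
    rw [← h2]; exact (Submodule.coe_norm y).symm
  -- norming elements for the net
  have hchoice : ∀ y : ↥Y, ∃ c : (ℕ × ℕ) →₀ ℝ, y ∈ netF →
      (c ∈ Finsupp.supported ℝ ℝ TT ∧ jhNorm c ≤ 1 + δ ∧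
        1 - 2*δ ≤ (y : X →L[ℝ] ℝ) (Phi e c)) := by
    intro y
    by_cases hy : y ∈ netF
    · obtain ⟨c, h1, h2, h3⟩ :=
        exists_norming e hnorm hdense' (y : X →L[ℝ] ℝ) (hnet_mem y hy) hδpos
      exact ⟨c, fun _ => ⟨h1, h2, h3⟩⟩
    · exact ⟨0, fun h => absurd h hy⟩
  choose cfun hcfun using hchoice
  set N := 1 + netF.sup (fun y => (cfun y).support.sup Prod.fst) with hN
  have hNlev : ∀ y ∈ netF, ∀ t ∈ (cfun y).support, t.1 < N := by
    intro y hy t ht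
    have h1 : t.1 ≤ (cfun y).support.sup Prod.fst := Finset.le_sup ht
    have h2 : (cfun y).support.sup Prod.fst
        ≤ netF.sup (fun y => (cfun y).support.sup Prod.fst) :=
      Finset.le_sup (f := fun y => (cfun y).support.sup Prod.fst) hy
    omega
  -- choice of the level k
  have hsummable : ∀ y ∈ netF, Summable (fun k => |(y : X →L[ℝ] ℝ) (Phi e (zeta k))|) :=
    fun y _ => summable_of_sum_range_le (fun k => abs_nonneg _)
      (fun K => sum_abs_g_Z_le e hnorm _ K)
  have hev1 : ∀ᶠ k in Filter.atTop, ∀ y ∈ netF,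
      |(y : X →L[ℝ] ℝ) (Phi e (zeta k))| < δ := by
    rw [Filter.eventually_all_finset]
    intro y hy
    exact ((hsummable y hy).tendsto_atTop_zero).eventually_lt_const hδpos
  have hev2 : ∀ᶠ k in Filter.atTop, (2:ℝ)^N * ((1:ℝ)/2)^k ≤ δ := by
    have t0 : Filter.Tendsto (fun k : ℕ => (2:ℝ)^N * ((1:ℝ)/2)^k) Filter.atTop (nhds 0) := by
      have h1 := tendsto_pow_atTop_nhds_zero_of_lt_one
        (by norm_num : (0:ℝ) ≤ 1/2) (by norm_num : (1:ℝ)/2 < 1)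
      have h2 := h1.const_mul ((2:ℝ)^N)
      simpa using h2
    exact (t0.eventually_lt_const hδpos).mono (fun k hk => le_of_lt hk)
  obtain ⟨k, hk1, hk2, hk3⟩ := (hev1.and (hev2.and (Filter.eventually_ge_atTop N))).exists
  obtain ⟨f, hf1, hf2⟩ := exists_f e hnorm hdense' k
  have hzsupp : zeta k ∈ Finsupp.supported ℝ ℝ TT := by
    rw [Finsupp.mem_supported]
    intro t ht
    exact zeta_support_subset k t ht
  have hZnorm : ‖Phi e (zeta k)‖ = 1 := by
    rw [Phi_norm e hnorm _ (zeta_support_subset k), jhNorm_zeta]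
  have hfZ : f (Phi e (zeta k)) = 1 := by
    rw [hf1 _ hzsupp, lvl_zeta]
  have hfnorm : ‖f‖ = 1 := by
    apply le_antisymm
    · exact f.opNorm_le_bound zero_le_one
        (fun x => by rw [Real.norm_eq_abs, one_mul]; exact hf2 x)
    · have h1 := f.le_opNorm (Phi e (zeta k))
      rw [hZnorm, mul_one, Real.norm_eq_abs, hfZ] at h1
      simpa using h1
  refine ⟨f, hfnorm, ?_⟩
  -- the key two-sided estimate for net members
  have hkey : ∀ y ∈ netF, ∀ s : ℝ, |s| = 1 →
      2 - 8*δ ≤ ‖s • f + (y : X →L[ℝ] ℝ)‖ := by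
    intro y hy s hs
    obtain ⟨hc1, hc2, hc3⟩ := hcfun y hy
    set c := cfun y with hc
    have hwmem : c + s • zeta k ∈ Finsupp.supported ℝ ℝ TT :=
      Submodule.add_mem _ hc1 (Submodule.smul_mem _ s hzsupp)
    have hwsupp : ∀ t ∈ (c + s • zeta k).support, t.2 < 2^t.1 :=
      fun t ht => (Finsupp.mem_supported ℝ _).1 hwmem ht
    have hwnorm : ‖Phi e (c + s • zeta k)‖ ≤ 1 + 2*δ := by
      rw [Phi_norm e hnorm _ hwsupp]
      have hB := estimateB (hNlev y hy) hk3 (le_of_eq hs)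
      have hmax : max (jhNorm c) 1 ≤ 1 + δ := max_le hc2 (by linarith)
      calc jhNorm (c + s • zeta k) ≤ max (jhNorm c) 1 + (2:ℝ)^N * ((1:ℝ)/2)^k := hB
        _ ≤ (1+δ) + δ := by linarith [hk2]
        _ = 1 + 2*δ := by ring
    have hPadd : Phi e (c + s • zeta k) = Phi e c + s • Phi e (zeta k) := by
      rw [map_add, map_smul]
    have hflvl : f (Phi e c) = 0 := by
      rw [hf1 c hc1, lvl_apply]
      refine Finset.sum_eq_zero fun j hj => ?_
      by_contra h
      have hts : ((k, j) : ℕ × ℕ) ∈ c.support := Finsupp.mem_support_iff.2 h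
      have := hNlev y hy _ hts
      simp only at this
      omega
    have hss : s * s = 1 := by
      rcases (abs_eq (zero_le_one)).1 hs with h | h <;> rw [h] <;> norm_num
    have hgZ : |(y : X →L[ℝ] ℝ) (Phi e (zeta k))| < δ := hk1 y hy
    have happly : 2 - 3*δ ≤ (s • f + (y : X →L[ℝ] ℝ)) (Phi e (c + s • zeta k)) := by
      rw [ContinuousLinearMap.add_apply, ContinuousLinearMap.smul_apply, hPadd,
        map_add, map_add, map_smul, map_smul, hflvl, hfZ]
      simp only [smul_eq_mul]
      have h1 : s * (0 + s * 1) = 1 := by rw [zero_add, mul_one]; exact hss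
      rw [h1]
      have h2 : -δ ≤ s * (y : X →L[ℝ] ℝ) (Phi e (zeta k)) := by
        have := neg_abs_le (s * (y : X →L[ℝ] ℝ) (Phi e (zeta k)))
        rw [abs_mul, hs, one_mul] at this
        linarith
      linarith [hc3]
    have hbnd : (s • f + (y : X →L[ℝ] ℝ)) (Phi e (c + s • zeta k))
        ≤ ‖s • f + (y : X →L[ℝ] ℝ)‖ * (1 + 2*δ) := by
      have h1 := (s • f + (y : X →L[ℝ] ℝ)).le_opNorm (Phi e (c + s • zeta k))
      rw [Real.norm_eq_abs] at h1
      have h2 := le_abs_self ((s • f + (y : X →L[ℝ] ℝ)) (Phi e (c + s • zeta k)))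
      have h3 := mul_le_mul_of_nonneg_left hwnorm
        (norm_nonneg (s • f + (y : X →L[ℝ] ℝ)))
      linarith
    have hnn := norm_nonneg (s • f + (y : X →L[ℝ] ℝ))
    nlinarith [happly, hbnd, hδpos, hδle]
  -- estimate for arbitrary scalars, net members
  have hkey2 : ∀ y ∈ netF, ∀ l : ℝ,
      (1 + |l|) * (1 - 8*δ) ≤ ‖l • f + (y : X →L[ℝ] ℝ)‖ := by
    intro y hy l
    set s : ℝ := if 0 ≤ l then (1:ℝ) else -1 with hsdef
    have hs : |s| = 1 := by
      by_cases h : 0 ≤ l <;> simp [hsdef, h]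
    have hls : l = |l| * s := by
      by_cases h : 0 ≤ l
      · simp [hsdef, h, abs_of_nonneg h]
      · simp [hsdef, h, abs_of_neg (lt_of_not_ge h)]
    have hk' := hkey y hy s hs
    set gy := (y : X →L[ℝ] ℝ) with hgy
    by_cases hl : |l| ≤ 1
    · have hid : l • f + gy = (s • f + gy) - ((1 - |l|) * s) • f := by
        ext x
        simp only [ContinuousLinearMap.add_apply, ContinuousLinearMap.sub_apply,
          ContinuousLinearMap.smul_apply, smul_eq_mul]
        have hlfx : l * f x = |l| * s * f x := by rw [← hls]
        rw [hlfx]; ring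
      rw [hid]
      have h1 := norm_sub_norm_le (s • f + gy) (((1 - |l|) * s) • f)
      have h2 : ‖((1 - |l|) * s) • f‖ = 1 - |l| := by
        rw [norm_smul ((1 - |l|) * s) f, Real.norm_eq_abs, abs_mul, hs, mul_one, hfnorm,
          mul_one, abs_of_nonneg (by linarith)]
      nlinarith [abs_nonneg l, hδpos]
    · push_neg at hl
      have hid : l • f + gy = |l| • (s • f + gy) - (|l| - 1) • gy := by
        ext x
        simp only [ContinuousLinearMap.add_apply, ContinuousLinearMap.sub_apply,
          ContinuousLinearMap.smul_apply, smul_eq_mul]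
        have hlfx : l * f x = |l| * s * f x := by rw [← hls]
        rw [hlfx]; ring
      rw [hid]
      have h1 := norm_sub_norm_le (|l| • (s • f + gy)) ((|l| - 1) • gy)
      have h2 : ‖|l| • (s • f + gy)‖ = |l| * ‖s • f + gy‖ := by
        rw [norm_smul |l| (s • f + gy), Real.norm_eq_abs, abs_abs]
      have h3 : ‖(|l| - 1) • gy‖ = |l| - 1 := by
        rw [norm_smul (|l| - 1) gy, Real.norm_eq_abs, hgy, hnet_mem y hy, mul_one,
          abs_of_nonneg (by linarith)]
      nlinarith [norm_nonneg (s • f + gy), hδpos]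
  -- conclusion
  intro g hgY l
  by_cases hg0 : g = 0
  · subst hg0
    simp only [norm_zero, add_zero]
    rw [norm_smul l f, Real.norm_eq_abs, hfnorm, mul_one]
    nlinarith [abs_nonneg l, hε]
  · have hr : 0 < ‖g‖ := norm_pos_iff.2 hg0
    set r := ‖g‖ with hrdef
    set yg : ↥Y := (r⁻¹ : ℝ) • (⟨g, hgY⟩ : ↥Y) with hyg
    have hygcoe : (yg : X →L[ℝ] ℝ) = r⁻¹ • g := by
      rw [hyg]; rfl
    have hygs : yg ∈ Metric.sphere (0:↥Y) 1 := by
      rw [mem_sphere_zero_iff_norm (E := ↥Y), hyg, (show ‖(r⁻¹ : ℝ) • (⟨g, hgY⟩ : ↥Y)‖ = ‖(r⁻¹ : ℝ)‖ * ‖(⟨g, hgY⟩ : ↥Y)‖ from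
          (Submodule.coe_norm _).trans (norm_smul (r⁻¹ : ℝ) g)),
        Real.norm_eq_abs, abs_inv, abs_of_pos hr]
      have h1 : ‖(⟨g, hgY⟩ : ↥Y)‖ = r := by rw [Submodule.coe_norm]
      rw [h1]
      field_simp
    have hcov := hnet_cov hygs
    rw [Set.mem_iUnion₂] at hcov
    obtain ⟨y₀, hy₀, hball⟩ := hcov
    have hy₀F : y₀ ∈ netF := hnet_fin.mem_toFinset.2 hy₀
    have hdist : ‖(yg : X →L[ℝ] ℝ) - (y₀ : X →L[ℝ] ℝ)‖ < δ := by
      have h1 : dist yg y₀ < δ := Metric.mem_ball.1 hball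
      rw [dist_eq_norm (E := ↥Y)] at h1
      have h2 : ((yg - y₀ : ↥Y) : X →L[ℝ] ℝ) = (yg : X →L[ℝ] ℝ) - (y₀ : X →L[ℝ] ℝ) := rfl
      calc ‖(yg : X →L[ℝ] ℝ) - (y₀ : X →L[ℝ] ℝ)‖ = ‖((yg - y₀ : ↥Y) : X →L[ℝ] ℝ)‖ := by
            rw [h2]
        _ = ‖yg - y₀‖ := (Submodule.coe_norm _).symm
        _ < δ := h1
    set lam := l / r with hlam
    have h1 := hkey2 y₀ hy₀F lam
    have h2 : (1 + |lam|) * (1 - 8*δ) - δ ≤ ‖lam • f + (yg : X →L[ℝ] ℝ)‖ := by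
      have h6 : (lam • f + (y₀ : X →L[ℝ] ℝ)) - ((y₀ : X →L[ℝ] ℝ) - (yg : X →L[ℝ] ℝ))
          = lam • f + (yg : X →L[ℝ] ℝ) := by abel
      have h5 := norm_sub_norm_le (lam • f + (y₀ : X →L[ℝ] ℝ))
        ((y₀ : X →L[ℝ] ℝ) - (yg : X →L[ℝ] ℝ))
      rw [h6] at h5
      have h7 : ‖(y₀ : X →L[ℝ] ℝ) - (yg : X →L[ℝ] ℝ)‖
          = ‖(yg : X →L[ℝ] ℝ) - (y₀ : X →L[ℝ] ℝ)‖ := norm_sub_rev _ _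
      linarith
    have h3 : (1 + |lam|) * (1 - 9*δ) ≤ (1 + |lam|) * (1 - 8*δ) - δ := by
      nlinarith [abs_nonneg lam, hδpos]
    have hεbound : 1 - 9*δ = 1 - ε' := by rw [hδdef]; ring
    have hscale : l • f + g = r • (lam • f + (yg : X →L[ℝ] ℝ)) := by
      rw [hygcoe, smul_add, smul_smul, smul_smul]
      congr 1
      · congr 1
        rw [hlam]
        field_simp
      · rw [mul_inv_cancel₀ (ne_of_gt hr), one_smul]
    have h4 : |l| = r * |lam| := by
      rw [hlam, abs_div, abs_of_pos hr]
      field_simp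
    rw [hscale, norm_smul r (lam • f + (yg : X →L[ℝ] ℝ)), Real.norm_eq_abs,
      abs_of_pos hr]
    calc (1 - ε) * (|l| + ‖g‖) ≤ (1 - ε') * (|l| + r) := by
          have ha : 1 - ε ≤ 1 - ε' := by
            have := min_le_left ε (1/2)
            rw [hε']
            linarith
          have hpos : 0 ≤ |l| + r := by
            have := abs_nonneg l
            linarith
          exact mul_le_mul_of_nonneg_right ha hpos
      _ = r * ((1 + |lam|) * (1 - ε')) := by rw [h4]; ring
      _ ≤ r * ‖lam • f + (yg : X →L[ℝ] ℝ)‖ := by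
          refine mul_le_mul_of_nonneg_left ?_ (le_of_lt hr)
          rw [← hεbound]
          linarith
end
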